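/- arXiv:2501.10962 — 4 statements merged into one kernel-verified Lean document; each statement's English description precedes it below -/
import Mathlib

section
/- Let H = {h₁,…,h_d} be a non-empty finite set of non-negative integers. For every prime p, the natural density η_p^H of the set N_{{p}}^H = {n ∈ ℕ : λ_{{p}}(n+h₁)⋯λ_{{p}}(n+h_d) = -1} exists. -/
open Filter Topology
open scoped symmDiff Classical

/-- `Ω_P(n)`: number of prime factors of `n` (with multiplicity) lying in `P`. -/
noncomputable def OmegaP (P : Set ℕ) (n : ℕ) : ℕ :=
  n.factorization.sum fun p k => if p ∈ P then k else 0

/-- `λ_P`, the completely multiplicative function equal to `-1` at primes in `P`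
and `1` at all other primes. -/
noncomputable def lambdaP (P : Set ℕ) (n : ℕ) : ℝ :=
  (-1 : ℝ) ^ OmegaP P n

/-- `Λ_P^H(n) = ∏_{h ∈ H} λ_P(n + h)` (empty product is `1`). -/
noncomputable def LambdaPH (P : Set ℕ) (H : Finset ℕ) (n : ℕ) : ℝ :=
  ∏ h ∈ H, lambdaP P (n + h)

/-- `N_P^H = {n : Λ_P^H(n) = -1}`. -/
def NPH (P : Set ℕ) (H : Finset ℕ) : Set ℕ :=
  {n : ℕ | LambdaPH P H n = -1}

/-- Number of elements of `A` in `[1, x]`. -/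
noncomputable def countIn (A : Set ℕ) (x : ℕ) : ℕ :=
  ((Finset.Icc 1 x).filter (fun n => n ∈ A)).card

/-- `A ⊆ ℕ` has natural density `d`: `|A ∩ [1,x]|/x → d`. -/
def HasDensity (A : Set ℕ) (d : ℝ) : Prop :=
  Filter.Tendsto (fun x : ℕ => (countIn A x : ℝ) / x) Filter.atTop (nhds d)

/-- The Cesàro average `(1/x) ∑_{n ≤ x} Λ_P^H(n)`. -/
noncomputable def cesaroAvg (P : Set ℕ) (H : Finset ℕ) (x : ℕ) : ℝ :=
  (∑ n ∈ Finset.Icc 1 x, LambdaPH P H n) / x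

/-- A set of naturals is small if the sum of reciprocals of its elements converges. -/
def SmallSet (P : Set ℕ) : Prop :=
  Summable fun p : P => (1 : ℝ) / (p : ℝ)

/-- `C(r,s) = {n : n ≡ -r (mod s)}`. -/
def Cset (r s : ℕ) : Set ℕ :=
  {n : ℕ | (n : ℤ) ≡ -(r : ℤ) [ZMOD (s : ℤ)]}

/-- The set of `P`-smooth positive integers. -/
def SmoothP (P : Set ℕ) : Set ℕ :=
  {n : ℕ | 0 < n ∧ ∀ p : ℕ, p.Prime → p ∣ n → p ∈ P}

/-- `𝒜_P`: all finite unions of sets from `{∅} ∪ {C(r,n) : r ∈ ℕ, n ∈ S_P}`. -/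
def calA (P : Set ℕ) : Set (Set ℕ) :=
  {A : Set ℕ | ∃ F : Finset (ℕ × ℕ), (∀ q ∈ F, q.2 ∈ SmoothP P) ∧
    A = ⋃ q ∈ F, Cset q.1 q.2}

namespace S0

lemma OmegaP_singleton (p n : ℕ) : OmegaP {p} n = n.factorization p := by
  classical
  unfold OmegaP
  rw [Finsupp.sum, Finset.sum_eq_single p]
  · simp
  · intro b _ hb; simp [hb]
  · intro h; simp [Finsupp.notMem_support_iff.mp h]

lemma mem_NPH_iff (p : ℕ) (H : Finset ℕ) (n : ℕ) :
    n ∈ NPH {p} H ↔ Odd (∑ h ∈ H, (n + h).factorization p) := by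
  have hL : LambdaPH {p} H n = (-1 : ℝ) ^ (∑ h ∈ H, (n + h).factorization p) := by
    unfold LambdaPH
    rw [show (∏ h ∈ H, lambdaP {p} (n + h))
        = ∏ h ∈ H, (-1 : ℝ) ^ ((n + h).factorization p) from
      Finset.prod_congr rfl fun h _ => by rw [lambdaP, OmegaP_singleton]]
    exact Finset.prod_pow_eq_pow_sum _ _ _
  constructor
  · intro hn
    rcases Nat.even_or_odd (∑ h ∈ H, (n + h).factorization p) with he | ho
    · exfalso
      have h1 : LambdaPH {p} H n = 1 := by rw [hL, he.neg_one_pow]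
      have h2 : LambdaPH {p} H n = -1 := hn
      norm_num [h1] at h2
    · exact ho
  · intro ho
    show LambdaPH {p} H n = -1
    rw [hL, ho.neg_one_pow]

lemma dvd_iff_of_modEq {m a b : ℕ} (h : a ≡ b [MOD m]) : m ∣ a ↔ m ∣ b := by
  rw [Nat.dvd_iff_mod_eq_zero, Nat.dvd_iff_mod_eq_zero, h]

lemma fact_congr {p : ℕ} (hp : p.Prime) {K a b : ℕ} (hab : a ≡ b [MOD p ^ K])
    (ha : ¬ p ^ K ∣ a) : a.factorization p = b.factorization p := by
  have hb : ¬ p ^ K ∣ b := by rw [← dvd_iff_of_modEq hab]; exact ha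
  have ha0 : a ≠ 0 := by rintro rfl; exact ha (dvd_zero _)
  have hb0 : b ≠ 0 := by rintro rfl; exact hb (dvd_zero _)
  set v := a.factorization p with hv
  have hvK : v < K := by
    by_contra hle
    exact ha ((hp.pow_dvd_iff_le_factorization ha0).mpr (le_of_not_gt hle))
  have hdvd : p ^ v ∣ a := (hp.pow_dvd_iff_le_factorization ha0).mpr le_rfl
  have hdK : ((p : ℤ) ^ K) ∣ (b : ℤ) - (a : ℤ) := by
    have := hab.dvd
    push_cast at this ⊢
    exact this
  have hdvdb : p ^ v ∣ b := by
    have h1 : ((p : ℤ) ^ v) ∣ (b : ℤ) := by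
      have h2 : ((p : ℤ) ^ v) ∣ (b : ℤ) - (a : ℤ) :=
        dvd_trans (pow_dvd_pow _ hvK.le) hdK
      have h3 : ((p : ℤ) ^ v) ∣ (a : ℤ) := by exact_mod_cast Int.natCast_dvd_natCast.mpr hdvd
      have := dvd_add h2 h3
      simpa using this
    exact_mod_cast h1
  have hnd : ¬ p ^ (v + 1) ∣ b := by
    intro hvb
    have h1 : ((p : ℤ) ^ (v + 1)) ∣ (a : ℤ) := by
      have h2 : ((p : ℤ) ^ (v + 1)) ∣ (a : ℤ) - (b : ℤ) := by
        have := dvd_trans (pow_dvd_pow (p : ℤ) (by omega : v + 1 ≤ K)) hdK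
        simpa using this.neg_right
      have h3 : ((p : ℤ) ^ (v + 1)) ∣ (b : ℤ) := by exact_mod_cast Int.natCast_dvd_natCast.mpr hvb
      have := dvd_add h2 h3
      simpa using this
    have h4 : p ^ (v + 1) ∣ a := by exact_mod_cast h1
    have := (hp.pow_dvd_iff_le_factorization ha0).mp h4
    omega
  have hle : v ≤ b.factorization p := (hp.pow_dvd_iff_le_factorization hb0).mp hdvdb
  have hlt : b.factorization p < v + 1 := by
    by_contra hc
    exact hnd ((hp.pow_dvd_iff_le_factorization hb0).mpr (le_of_not_gt hc))
  omega

lemma block_card {m : ℕ} (hm : 0 < m) {T : Finset ℕ} (hT : ∀ r ∈ T, r < m) (k : ℕ) :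
    ((Finset.Ico (k * m) ((k + 1) * m)).filter (fun n => n % m ∈ T)).card = T.card := by
  classical
  have himg : (Finset.Ico (k * m) ((k + 1) * m)).filter (fun n => n % m ∈ T)
      = T.image (fun r => r + k * m) := by
    ext n
    simp only [Finset.mem_filter, Finset.mem_Ico, Finset.mem_image]
    constructor
    · rintro ⟨⟨h1, h2⟩, h3⟩
      refine ⟨n % m, h3, ?_⟩
      have hdiv : n / m = k := Nat.div_eq_of_lt_le h1 h2
      have hmd := Nat.mod_add_div n m
      rw [hdiv] at hmd
      linarith [hmd]
    · rintro ⟨r, hr, rfl⟩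
      have hrm : r < m := hT r hr
      have hmod : (r + k * m) % m = r := by
        rw [Nat.add_mul_mod_self_right, Nat.mod_eq_of_lt hrm]
      have hkm : (k + 1) * m = k * m + m := by ring
      exact ⟨⟨Nat.le_add_left _ _, by omega⟩, by rw [hmod]; exact hr⟩
  rw [himg, Finset.card_image_of_injective _ (add_left_injective _)]

lemma range_mul_card {m : ℕ} (hm : 0 < m) {T : Finset ℕ} (hT : ∀ r ∈ T, r < m) (q : ℕ) :
    ((Finset.range (q * m)).filter (fun n => n % m ∈ T)).card = q * T.card := by
  classical
  induction q with
  | zero => simp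
  | succ q ih =>
    have hsplit : Finset.range ((q + 1) * m)
        = Finset.range (q * m) ∪ Finset.Ico (q * m) ((q + 1) * m) := by
      rw [Finset.range_eq_Ico,
        ← Finset.Ico_union_Ico_eq_Ico (Nat.zero_le (q * m))
          (Nat.mul_le_mul_right m (Nat.le_succ q))]
      simp only [Nat.succ_eq_add_one, Finset.range_eq_Ico]
    have hdisj : Disjoint ((Finset.range (q * m)).filter (fun n => n % m ∈ T))
        ((Finset.Ico (q * m) ((q + 1) * m)).filter (fun n => n % m ∈ T)) := by
      apply Finset.disjoint_filter_filter
      rw [Finset.range_eq_Ico]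
      exact Finset.Ico_disjoint_Ico_consecutive _ _ _
    rw [hsplit, Finset.filter_union, Finset.card_union_of_disjoint hdisj, ih,
      block_card hm hT q]
    ring

lemma range_count_bounds {m : ℕ} (hm : 0 < m) {T : Finset ℕ} (hT : ∀ r ∈ T, r < m) (x : ℕ) :
    (x / m) * T.card ≤ ((Finset.range x).filter (fun n => n % m ∈ T)).card ∧
    ((Finset.range x).filter (fun n => n % m ∈ T)).card ≤ (x / m) * T.card + T.card := by
  classical
  have hmono : ∀ a b : ℕ, a ≤ b →
      ((Finset.range a).filter (fun n => n % m ∈ T)).card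
        ≤ ((Finset.range b).filter (fun n => n % m ∈ T)).card :=
    fun a b hab => Finset.card_le_card
      (Finset.filter_subset_filter _ (Finset.range_subset_range.mpr hab))
  have hx1 : (x / m) * m ≤ x := Nat.div_mul_le_self x m
  have hx2 : x ≤ (x / m + 1) * m := by
    have h1 := Nat.mod_add_div x m
    have h2 := Nat.mod_lt x hm
    nlinarith [h1, h2]
  constructor
  · have := hmono ((x / m) * m) x hx1
    rwa [range_mul_card hm hT] at this
  · have := hmono x ((x / m + 1) * m) hx2
    rw [range_mul_card hm hT] at this
    nlinarith [this]

lemma countIn_range_bounds (A : Set ℕ) (x : ℕ) :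
    ((Finset.range x).filter (fun n => n ∈ A)).card ≤ countIn A x + 1 ∧
    countIn A x ≤ ((Finset.range x).filter (fun n => n ∈ A)).card + 1 := by
  classical
  constructor
  · have hsub : (Finset.range x).filter (fun n => n ∈ A)
        ⊆ insert 0 ((Finset.Icc 1 x).filter (fun n => n ∈ A)) := by
      intro n hn
      simp only [Finset.mem_filter, Finset.mem_range] at hn
      rcases Nat.eq_zero_or_pos n with rfl | hn0
      · exact Finset.mem_insert_self _ _
      · exact Finset.mem_insert_of_mem (by
          simp only [Finset.mem_filter, Finset.mem_Icc]
          exact ⟨⟨hn0, by omega⟩, hn.2⟩)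
    calc ((Finset.range x).filter (fun n => n ∈ A)).card
        ≤ (insert 0 ((Finset.Icc 1 x).filter (fun n => n ∈ A))).card :=
          Finset.card_le_card hsub
      _ ≤ countIn A x + 1 := by rw [countIn]; exact Finset.card_insert_le _ _
  · have hsub : (Finset.Icc 1 x).filter (fun n => n ∈ A)
        ⊆ insert x ((Finset.range x).filter (fun n => n ∈ A)) := by
      intro n hn
      simp only [Finset.mem_filter, Finset.mem_Icc] at hn
      rcases eq_or_lt_of_le hn.1.2 with rfl | hlt
      · exact Finset.mem_insert_self _ _
      · exact Finset.mem_insert_of_mem (by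
          simp only [Finset.mem_filter, Finset.mem_range]
          exact ⟨hlt, hn.2⟩)
    calc countIn A x ≤ (insert x ((Finset.range x).filter (fun n => n ∈ A))).card :=
          Finset.card_le_card hsub
      _ ≤ _ + 1 := Finset.card_insert_le _ _

lemma periodic_est {m : ℕ} (hm : 0 < m) {A : Set ℕ} (hA : ∀ n, n ∈ A ↔ n % m ∈ A)
    {x : ℕ} (hx : 0 < x) :
    |(countIn A x : ℝ) / x - (((Finset.range m).filter (fun r => r ∈ A)).card : ℝ) / m|
      ≤ (m + 1) / x := by
  classical
  set T := (Finset.range m).filter (fun r => r ∈ A) with hT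
  have hTlt : ∀ r ∈ T, r < m := fun r hr => Finset.mem_range.mp (Finset.mem_filter.mp hr).1
  have hiff : ∀ n, n ∈ A ↔ n % m ∈ T := by
    intro n
    rw [hT, Finset.mem_filter, Finset.mem_range]
    constructor
    · intro hn; exact ⟨Nat.mod_lt n hm, (hA n).mp hn⟩
    · intro hn; exact (hA n).mpr hn.2
  have hfeq : (Finset.range x).filter (fun n => n ∈ A)
      = (Finset.range x).filter (fun n => n % m ∈ T) :=
    Finset.filter_congr (fun n _ => by rw [hiff n])
  obtain ⟨hc1, hc2⟩ := range_count_bounds hm hTlt x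
  obtain ⟨hb1, hb2⟩ := countIn_range_bounds A x
  rw [hfeq] at hb1 hb2
  set c := ((Finset.range x).filter (fun n => n % m ∈ T)).card
  set q := x / m with hqdef
  have hq1 : q * m ≤ x := Nat.div_mul_le_self x m
  have hq2 : x < q * m + m := by
    have h1 := Nat.mod_add_div' x m
    have h2 := Nat.mod_lt x hm
    rw [hqdef]
    linarith [h1, h2]
  have htm : T.card ≤ m := by
    calc T.card ≤ (Finset.range m).card := Finset.card_le_card (Finset.filter_subset _ _)
      _ = m := Finset.card_range m
  -- cast to ℝ
  have rc1 : (q : ℝ) * T.card ≤ c := by exact_mod_cast hc1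
  have rc2 : (c : ℝ) ≤ q * T.card + T.card := by exact_mod_cast hc2
  have rb1 : (c : ℝ) ≤ countIn A x + 1 := by exact_mod_cast hb1
  have rb2 : (countIn A x : ℝ) ≤ c + 1 := by exact_mod_cast hb2
  have rq1 : (q : ℝ) * m ≤ x := by exact_mod_cast hq1
  have rq2 : (x : ℝ) < q * m + m := by exact_mod_cast hq2
  have rtm : (T.card : ℝ) ≤ m := by exact_mod_cast htm
  have rt0 : (0 : ℝ) ≤ T.card := Nat.cast_nonneg _
  have hx' : (0 : ℝ) < x := by exact_mod_cast hx
  have hm' : (0 : ℝ) < m := by exact_mod_cast hm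
  rw [abs_sub_le_iff]
  constructor
  · rw [div_sub_div _ _ (ne_of_gt hx') (ne_of_gt hm'), div_le_div_iff₀ (by positivity) hx']
    have key : (countIn A x : ℝ) * m - x * T.card ≤ (m + 1) * m := by
      nlinarith [mul_le_mul_of_nonneg_left rq1 rt0]
    nlinarith [mul_le_mul_of_nonneg_right key hx'.le]
  · rw [div_sub_div _ _ (ne_of_gt hm') (ne_of_gt hx'), div_le_div_iff₀ (by positivity) hx']
    have key : (T.card : ℝ) * x - countIn A x * m ≤ (m + 1) * m := by
      nlinarith [mul_le_mul_of_nonneg_left rq2.le rt0]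
    nlinarith [mul_le_mul_of_nonneg_right key hx'.le]

def Bh (p K h : ℕ) : Set ℕ := {n | p ^ K ∣ (n + h)}
def NB (p K : ℕ) (H : Finset ℕ) : Set ℕ := {n | ∃ h ∈ H, p ^ K ∣ (n + h)}
def AK (p K : ℕ) (H : Finset ℕ) : Set ℕ := NPH {p} H \ NB p K H

lemma modEq_add (n m h : ℕ) : n + h ≡ n % m + h [MOD m] :=
  ((Nat.mod_modEq n m).symm).add_right h

lemma Bh_periodic (p K h : ℕ) (n : ℕ) : n ∈ Bh p K h ↔ n % p ^ K ∈ Bh p K h :=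
  dvd_iff_of_modEq (modEq_add n (p ^ K) h)

lemma NB_periodic (p K : ℕ) (H : Finset ℕ) (n : ℕ) :
    n ∈ NB p K H ↔ n % p ^ K ∈ NB p K H := by
  simp only [NB, Set.mem_setOf_eq]
  constructor
  · rintro ⟨h, hh, hd⟩
    exact ⟨h, hh, (dvd_iff_of_modEq (modEq_add n (p ^ K) h)).mp hd⟩
  · rintro ⟨h, hh, hd⟩
    exact ⟨h, hh, (dvd_iff_of_modEq (modEq_add n (p ^ K) h)).mpr hd⟩

lemma AK_periodic {p : ℕ} (hp : p.Prime) (K : ℕ) (H : Finset ℕ) (n : ℕ) :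
    n ∈ AK p K H ↔ n % p ^ K ∈ AK p K H := by
  have key : n ∉ NB p K H →
      (∑ h ∈ H, (n + h).factorization p) = ∑ h ∈ H, (n % p ^ K + h).factorization p := by
    intro hn
    refine Finset.sum_congr rfl fun h hh => ?_
    exact fact_congr hp (modEq_add n (p ^ K) h) (fun hd => hn ⟨h, hh, hd⟩)
  constructor
  · rintro ⟨h1, h2⟩
    refine ⟨?_, fun hc => h2 ((NB_periodic p K H n).mpr hc)⟩
    rw [mem_NPH_iff] at h1 ⊢
    rw [← key h2]; exact h1
  · rintro ⟨h1, h2⟩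
    have hnb : n ∉ NB p K H := fun hc => h2 ((NB_periodic p K H n).mp hc)
    refine ⟨?_, hnb⟩
    rw [mem_NPH_iff] at h1 ⊢
    rw [key hnb]; exact h1

lemma Bh_res_card {p K : ℕ} (hm : 0 < p ^ K) (h : ℕ) :
    ((Finset.range (p ^ K)).filter (fun r => r ∈ Bh p K h)).card ≤ 1 := by
  classical
  apply Finset.card_le_one.mpr
  intro a ha b hb
  simp only [Finset.mem_filter, Finset.mem_range, Bh, Set.mem_setOf_eq] at ha hb
  rcases le_total a b with hab | hab
  · have := Nat.dvd_sub hb.2 ha.2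
    rw [show b + h - (a + h) = b - a by omega] at this
    have := Nat.eq_zero_of_dvd_of_lt this
    omega
  · have := Nat.dvd_sub ha.2 hb.2
    rw [show a + h - (b + h) = a - b by omega] at this
    have := Nat.eq_zero_of_dvd_of_lt this
    omega

lemma countIn_mono {A B : Set ℕ} (h : A ⊆ B) (x : ℕ) : countIn A x ≤ countIn B x := by
  classical
  apply Finset.card_le_card
  intro n hn
  simp only [Finset.mem_filter] at hn ⊢
  exact ⟨hn.1, h hn.2⟩

lemma countIn_union_le (A B : Set ℕ) (x : ℕ) :
    countIn (A ∪ B) x ≤ countIn A x + countIn B x := by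
  classical
  calc countIn (A ∪ B) x
      ≤ ((Finset.Icc 1 x).filter (fun n => n ∈ A) ∪
         (Finset.Icc 1 x).filter (fun n => n ∈ B)).card := by
        apply Finset.card_le_card
        intro n hn
        simp only [Finset.mem_filter, Finset.mem_union, Set.mem_union] at hn ⊢
        tauto
    _ ≤ _ := Finset.card_union_le _ _

lemma countIn_NB_le (p K : ℕ) (H : Finset ℕ) (x : ℕ) :
    countIn (NB p K H) x ≤ ∑ h ∈ H, countIn (Bh p K h) x := by
  classical
  calc countIn (NB p K H) x
      ≤ (H.biUnion (fun h => (Finset.Icc 1 x).filter (fun n => n ∈ Bh p K h))).card := by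
        apply Finset.card_le_card
        intro n hn
        simp only [Finset.mem_filter, NB, Set.mem_setOf_eq] at hn
        obtain ⟨hn1, h, hh, hd⟩ := hn
        exact Finset.mem_biUnion.mpr ⟨h, hh, Finset.mem_filter.mpr ⟨hn1, hd⟩⟩
    _ ≤ _ := Finset.card_biUnion_le

lemma key_est {p : ℕ} (hp : p.Prime) (H : Finset ℕ) (K : ℕ) :
    ∃ dK : ℝ, ∀ y : ℕ, 0 < y →
      |(countIn (NPH {p} H) y : ℝ) / y - dK|
        ≤ (H.card : ℝ) / (p ^ K : ℕ) + ((H.card : ℝ) + 1) * ((p ^ K : ℕ) + 1) / y := by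
  classical
  have hm : 0 < p ^ K := pow_pos hp.pos K
  set m := p ^ K with hmdef
  refine ⟨(((Finset.range m).filter (fun r => r ∈ AK p K H)).card : ℝ) / m, ?_⟩
  intro y hy
  have hy' : (0 : ℝ) < y := by exact_mod_cast hy
  have hm' : (0 : ℝ) < m := by exact_mod_cast hm
  -- periodic estimate for AK
  have eA := periodic_est hm (AK_periodic hp K H) hy
  -- bound on the bad set
  have eB : (countIn (NB p K H) y : ℝ) / y ≤ (H.card : ℝ) * (1 / m + (m + 1) / y) := by
    have h1 : (countIn (NB p K H) y : ℝ) ≤ ∑ h ∈ H, (countIn (Bh p K h) y : ℝ) := by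
      exact_mod_cast countIn_NB_le p K H y
    have h2 : ∀ h ∈ H, (countIn (Bh p K h) y : ℝ) / y ≤ 1 / m + (m + 1) / y := by
      intro h _
      have e := periodic_est hm (Bh_periodic p K h) hy
      have ht : (((Finset.range m).filter (fun r => r ∈ Bh p K h)).card : ℝ) ≤ 1 := by
        exact_mod_cast Bh_res_card hm h
      have := abs_le.mp e
      have h3 : (countIn (Bh p K h) y : ℝ) / y
          ≤ (((Finset.range m).filter (fun r => r ∈ Bh p K h)).card : ℝ) / m + (m + 1) / y := by
        linarith [this.2]
      have h4 : (((Finset.range m).filter (fun r => r ∈ Bh p K h)).card : ℝ) / m ≤ 1 / m := by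
        apply div_le_div_of_nonneg_right ht hm'.le |>.trans_eq rfl
      linarith
    calc (countIn (NB p K H) y : ℝ) / y ≤ (∑ h ∈ H, (countIn (Bh p K h) y : ℝ)) / y := by
          apply div_le_div_of_nonneg_right h1 hy'.le |>.trans_eq rfl
      _ = ∑ h ∈ H, (countIn (Bh p K h) y : ℝ) / y := by rw [Finset.sum_div]
      _ ≤ ∑ h ∈ H, (1 / (m:ℝ) + (m + 1) / y) := Finset.sum_le_sum h2
      _ = (H.card : ℝ) * (1 / m + (m + 1) / y) := by
          rw [Finset.sum_const, nsmul_eq_mul]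
  -- relating countIn N and countIn AK
  have hsub1 : AK p K H ⊆ NPH {p} H := Set.diff_subset
  have hsub2 : NPH {p} H ⊆ AK p K H ∪ NB p K H := by
    intro n hn
    by_cases hnb : n ∈ NB p K H
    · exact Or.inr hnb
    · exact Or.inl ⟨hn, hnb⟩
  have hN1 : countIn (AK p K H) y ≤ countIn (NPH {p} H) y := countIn_mono hsub1 y
  have hN2 : countIn (NPH {p} H) y ≤ countIn (AK p K H) y + countIn (NB p K H) y :=
    le_trans (countIn_mono hsub2 y) (countIn_union_le _ _ y)
  have rN1 : (countIn (AK p K H) y : ℝ) ≤ countIn (NPH {p} H) y := by exact_mod_cast hN1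
  have rN2 : (countIn (NPH {p} H) y : ℝ)
      ≤ countIn (AK p K H) y + countIn (NB p K H) y := by exact_mod_cast hN2
  have eN : |(countIn (NPH {p} H) y : ℝ) / y - (countIn (AK p K H) y : ℝ) / y|
      ≤ (countIn (NB p K H) y : ℝ) / y := by
    rw [abs_le]
    constructor
    · rw [div_sub_div_same]
      apply neg_le_of_neg_le
      rw [← neg_div]
      apply div_le_div_of_nonneg_right _ hy'.le
      have : (0:ℝ) ≤ countIn (NB p K H) y := Nat.cast_nonneg _
      linarith
    · rw [div_sub_div_same]
      apply div_le_div_of_nonneg_right _ hy'.le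
      linarith
  have habs := abs_le.mp eA
  have htotal := abs_sub_le ((countIn (NPH {p} H) y : ℝ) / y)
    ((countIn (AK p K H) y : ℝ) / y)
    ((((Finset.range m).filter (fun r => r ∈ AK p K H)).card : ℝ) / m)
  have hfin : |(countIn (NPH {p} H) y : ℝ) / y
      - (((Finset.range m).filter (fun r => r ∈ AK p K H)).card : ℝ) / m|
      ≤ (H.card : ℝ) * (1 / m + (m + 1) / y) + ((m:ℝ) + 1) / y := by
    linarith [eN, eA, eB, htotal]
  calc |(countIn (NPH {p} H) y : ℝ) / y
      - (((Finset.range m).filter (fun r => r ∈ AK p K H)).card : ℝ) / m|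
      ≤ (H.card : ℝ) * (1 / m + (m + 1) / y) + ((m:ℝ) + 1) / y := hfin
    _ = (H.card : ℝ) / m + ((H.card : ℝ) + 1) * ((m:ℝ) + 1) / y := by ring
    _ = (H.card : ℝ) / (m : ℕ) + ((H.card : ℝ) + 1) * (((m:ℕ) : ℝ) + 1) / y := by norm_num

end S0

/-- For a non-empty finite set `H` of non-negative integers and every
prime `p`, the natural density `η_p^H` of `N_{{p}}^H` exists. -/
theorem stmt_0 (H : Finset ℕ) (hH : H.Nonempty) (p : ℕ) (hp : p.Prime) :
    ∃ d : ℝ, HasDensity (NPH {p} H) d := by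
  have hC : CauchySeq (fun x : ℕ => (countIn (NPH {p} H) x : ℝ) / x) := by
    rw [Metric.cauchySeq_iff']
    intro ε hε
    obtain ⟨K, hK⟩ := pow_unbounded_of_one_lt (4 * (H.card : ℝ) / ε)
      (by exact_mod_cast hp.one_lt : (1 : ℝ) < p)
    have hp0 : (0 : ℝ) < (p : ℝ) := by exact_mod_cast hp.pos
    have hpK : (0 : ℝ) < (p : ℝ) ^ K := pow_pos hp0 K
    have hcast : ((p ^ K : ℕ) : ℝ) = (p : ℝ) ^ K := by push_cast; ring
    have h4 : 4 * (H.card : ℝ) < ε * (p : ℝ) ^ K := by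
      have := (div_lt_iff₀ hε).mp hK
      nlinarith
    have hKe : (H.card : ℝ) / ((p ^ K : ℕ) : ℝ) < ε / 4 := by
      rw [hcast, div_lt_div_iff₀ hpK (by norm_num : (0:ℝ) < 4)]
      linarith
    obtain ⟨dK, hdK⟩ := S0.key_est hp H K
    set C := ((H.card : ℝ) + 1) * (((p ^ K : ℕ) : ℝ) + 1) with hCdef
    have hC0 : (0 : ℝ) < C := by
      rw [hCdef]
      have h1 : (0:ℝ) ≤ ((p ^ K : ℕ) : ℝ) := Nat.cast_nonneg _
      have h2 : (0:ℝ) ≤ (H.card : ℝ) := Nat.cast_nonneg _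
      nlinarith
    obtain ⟨X, hX⟩ := exists_nat_gt (C / (ε / 4))
    refine ⟨X + 1, ?_⟩
    intro n hn
    have hn0 : 0 < n := by omega
    have hN0 : 0 < X + 1 := by omega
    have hxe : ∀ y : ℕ, X + 1 ≤ y → C / y < ε / 4 := by
      intro y hy
      have hy0 : 0 < y := by omega
      have hy' : (0 : ℝ) < y := by exact_mod_cast hy0
      rw [div_lt_iff₀ hy']
      have hylt : C / (ε / 4) < (y : ℝ) := lt_of_lt_of_le hX (by exact_mod_cast (by omega : X ≤ y))
      have hε4 : (0 : ℝ) < ε / 4 := by linarith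
      calc C = (ε / 4) * (C / (ε / 4)) := by field_simp
        _ < (ε / 4) * y := by exact mul_lt_mul_of_pos_left hylt hε4
        _ = ε / 4 * y := rfl
    have e1 := hdK n hn0
    have e2 := hdK (X + 1) hN0
    have c1 := hxe n hn
    have c2 := hxe (X + 1) le_rfl
    rw [Real.dist_eq]
    have habs := abs_sub_le ((countIn (NPH {p} H) n : ℝ) / n) dK
      ((countIn (NPH {p} H) (X + 1) : ℝ) / (X + 1))
    have h1 := abs_sub_comm dK ((countIn (NPH {p} H) (X + 1) : ℝ) / (X + 1))
    push_cast at e1 e2 c1 c2 ⊢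
    push_cast at hKe
    linarith [e1, e2, c1, c2, habs, h1, hKe]
  obtain ⟨d, hd⟩ := cauchySeq_tendsto_of_complete hC
  exact ⟨d, hd⟩
end

section
/- Let H = {h₁,…,h_d} be a non-empty finite set of non-negative integers and let P be a small set of primes (the sum of reciprocals of the elements of P converges). Then the limit κ_P^H := lim_{x→∞} (1/x) Σ_{n≤x} λ_P(n+h₁)⋯λ_P(n+h_d) exists and equals the (possibly infinite, convergent) product ∏_{p∈P} (1 − 2η_p^H). -/
open Filter Topology
open scoped symmDiff Classical

-- basic lemmas
lemma OmegaP_split (P P' : Set ℕ) (hsub : P' ⊆ P) (n : ℕ) :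
    OmegaP P n = OmegaP P' n + OmegaP (P \ P') n := by
  unfold OmegaP
  rw [← Finsupp.sum_add]
  apply Finsupp.sum_congr
  intro p _
  by_cases h1 : p ∈ P'
  · simp [h1, hsub h1]
  · by_cases h2 : p ∈ P <;> simp [h1, h2]

lemma OmegaP_eq_zero (Q : Set ℕ) (n : ℕ) (h : ∀ p ∈ Q, ¬ p ∣ n) : OmegaP Q n = 0 := by
  unfold OmegaP
  apply Finset.sum_eq_zero
  intro p hp
  have hdvd : p ∣ n := Nat.dvd_of_mem_primeFactors (by rwa [← Nat.support_factorization])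
  by_cases hq : p ∈ Q
  · exact absurd hdvd (h p hq)
  · simp [hq]

lemma OmegaP_singleton (p n : ℕ) : OmegaP {p} n = n.factorization p := by
  unfold OmegaP
  rw [Finsupp.sum]
  simp only [Set.mem_singleton_iff]
  rw [Finset.sum_ite_eq' n.factorization.support p (fun q => n.factorization q)]
  by_cases h : p ∈ n.factorization.support
  · rw [if_pos h]
  · rw [if_neg h]; exact (Finsupp.notMem_support_iff.mp h).symm

lemma lambdaP_congr (P P' : Set ℕ) (hsub : P' ⊆ P) (n : ℕ)
    (h : ∀ p ∈ P, p ∉ P' → ¬ p ∣ n) : lambdaP P n = lambdaP P' n := by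
  unfold lambdaP
  rw [OmegaP_split P P' hsub n, OmegaP_eq_zero (P \ P') n (fun p hp => h p hp.1 hp.2),
    add_zero]

lemma LambdaPH_congr (P P' : Set ℕ) (H : Finset ℕ) (hsub : P' ⊆ P) (n : ℕ)
    (h : ∀ p ∈ P, p ∉ P' → ∀ h' ∈ H, ¬ p ∣ (n + h')) :
    LambdaPH P H n = LambdaPH P' H n :=
  Finset.prod_congr rfl fun h' hh' =>
    lambdaP_congr P P' hsub _ (fun p hp hp' => h p hp hp' h' hh')

lemma OmegaP_finset (S : Finset ℕ) (n : ℕ) :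
    OmegaP ↑S n = ∑ p ∈ S, n.factorization p := by
  classical
  induction S using Finset.induction_on with
  | empty =>
    rw [Finset.sum_empty]
    simpa using OmegaP_eq_zero ∅ n (by simp)
  | @insert a s ha ih =>
    have hsub : ({a} : Set ℕ) ⊆ ↑(insert a s) := by simp
    have hdiff : (↑(insert a s) : Set ℕ) \ {a} = ↑s := by
      ext x; simp only [Finset.coe_insert, Set.mem_diff, Set.mem_insert_iff,
        Finset.mem_coe, Set.mem_singleton_iff]
      constructor
      · rintro ⟨h1 | h1, h2⟩ <;> tauto
      · intro hx; exact ⟨Or.inr hx, fun hx' => ha (hx' ▸ hx)⟩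
    rw [OmegaP_split ↑(insert a s) {a} hsub n, hdiff, OmegaP_singleton, ih,
      Finset.sum_insert ha]

lemma lambdaP_finset (S : Finset ℕ) (n : ℕ) :
    lambdaP ↑S n = ∏ p ∈ S, (-1 : ℝ) ^ (n.factorization p) := by
  rw [lambdaP, OmegaP_finset, Finset.prod_pow_eq_pow_sum]

lemma lambdaP_cases (P : Set ℕ) (n : ℕ) : lambdaP P n = 1 ∨ lambdaP P n = -1 := by
  rcases Nat.even_or_odd (OmegaP P n) with h | h
  · exact Or.inl (h.neg_one_pow)
  · exact Or.inr (h.neg_one_pow)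

lemma LambdaPH_cases (P : Set ℕ) (H : Finset ℕ) (n : ℕ) :
    LambdaPH P H n = 1 ∨ LambdaPH P H n = -1 := by
  unfold LambdaPH
  induction H using Finset.induction_on with
  | empty => simp
  | @insert a s ha ih =>
    rw [Finset.prod_insert ha]
    rcases lambdaP_cases P (n + a) with h | h <;> rcases ih with h' | h' <;>
      rw [h, h'] <;> norm_num

lemma LambdaPH_abs_le (P : Set ℕ) (H : Finset ℕ) (n : ℕ) : |LambdaPH P H n| ≤ 1 := by
  rcases LambdaPH_cases P H n with h | h <;> rw [h] <;> norm_num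

lemma count_dvd_le (m h x : ℕ) (hm : 0 < m) :
    (((Finset.Icc 1 x)).filter (fun n => m ∣ n + h)).card ≤ (x + h) / m := by
  have hcard := Finset.card_le_card_of_injOn (fun n => (n + h) / m)
    (s := (Finset.Icc 1 x).filter (fun n => m ∣ n + h))
    (t := Finset.Icc 1 ((x + h) / m)) ?_ ?_
  · simpa [Nat.card_Icc] using hcard
  · intro n hn
    simp only [Finset.mem_coe, Finset.mem_filter, Finset.mem_Icc] at hn
    obtain ⟨⟨h1, h2⟩, hdvd⟩ := hn
    simp only [Finset.mem_coe, Finset.mem_Icc]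
    exact ⟨(Nat.one_le_div_iff hm).mpr (Nat.le_of_dvd (by omega) hdvd),
      Nat.div_le_div_right (by omega)⟩
  · intro n1 hn1 n2 hn2 heq
    simp only [Finset.coe_filter, Set.mem_setOf_eq, Finset.mem_Icc] at hn1 hn2
    have heq' : (n1 + h) / m = (n2 + h) / m := heq
    have e1 : (n1 + h) / m * m = n1 + h := Nat.div_mul_cancel hn1.2
    have e2 : (n2 + h) / m * m = n2 + h := Nat.div_mul_cancel hn2.2
    have : n1 + h = n2 + h := by rw [← e1, ← e2, heq']
    omega

lemma sum_abs_diff_le (s : Finset ℕ) (a b : ℕ → ℝ)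
    (ha : ∀ n, |a n| ≤ 1) (hb : ∀ n, |b n| ≤ 1) :
    |∑ n ∈ s, a n - ∑ n ∈ s, b n| ≤ 2 * (s.filter (fun n => a n ≠ b n)).card := by
  rw [← Finset.sum_sub_distrib]
  refine (Finset.abs_sum_le_sum_abs _ _).trans ?_
  have hstep : ∀ n ∈ s, |a n - b n| ≤ if a n ≠ b n then 2 else 0 := by
    intro n _
    by_cases h : a n = b n
    · simp [h]
    · rw [if_pos h]
      calc |a n - b n| ≤ |a n| + |b n| := abs_sub _ _
        _ ≤ 2 := by linarith [ha n, hb n]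
  refine (Finset.sum_le_sum hstep).trans ?_
  rw [Finset.sum_ite, Finset.sum_const, Finset.sum_const]
  simp [mul_comm]

lemma sum_range_mul_period (f : ℕ → ℝ) (M : ℕ) (hf : ∀ n, f n = f (n % M)) (q : ℕ) :
    ∑ n ∈ Finset.range (q * M), f n = q * ∑ n ∈ Finset.range M, f n := by
  induction q with
  | zero => simp
  | succ q ih =>
    have hqM : (q + 1) * M = q * M + M := by ring
    rw [hqM, Finset.sum_range_add, ih]
    have hcong : ∑ i ∈ Finset.range M, f (q * M + i) = ∑ i ∈ Finset.range M, f i := by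
      apply Finset.sum_congr rfl
      intro i _
      rw [hf (q * M + i), add_comm (q * M) i, Nat.add_mul_mod_self_right, ← hf i]
    rw [hcong]
    push_cast
    ring

lemma cesaro_of_periodic (f : ℕ → ℝ) (M : ℕ) (hM : 0 < M) (hf : ∀ n, f n = f (n % M))
    (C : ℝ) (hC : ∀ n, |f n| ≤ C) :
    Filter.Tendsto (fun x : ℕ => (∑ n ∈ Finset.Icc 1 x, f n) / x) Filter.atTop
      (nhds ((∑ n ∈ Finset.range M, f n) / M)) := by
  set T := ∑ n ∈ Finset.range M, f n with hT
  have hC0 : 0 ≤ C := le_trans (abs_nonneg _) (hC 0)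
  have hM' : (0:ℝ) < M := by exact_mod_cast hM
  have hTabs : |T| ≤ C * M := by
    refine (Finset.abs_sum_le_sum_abs _ _).trans ?_
    calc ∑ n ∈ Finset.range M, |f n| ≤ ∑ _n ∈ Finset.range M, C :=
          Finset.sum_le_sum (fun n _ => hC n)
      _ = C * M := by simp [mul_comm]
  have key : ∀ x : ℕ, |(∑ n ∈ Finset.Icc 1 x, f n) - (x : ℝ) * T / M| ≤ C * (2 * M + 2) := by
    intro x
    set q := (x + 1) / M with hq
    set r := (x + 1) % M with hrdef
    have h1 : q * M + r = x + 1 := by rw [hq, hrdef, mul_comm]; exact Nat.div_add_mod _ _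
    have h2 : r < M := Nat.mod_lt _ hM
    set R := ∑ i ∈ Finset.range r, f (q * M + i) with hR
    have e1 : ∑ n ∈ Finset.Icc 1 x, f n = ∑ n ∈ Finset.range (x + 1), f n - f 0 := by
      rw [Finset.sum_range_succ', ← Finset.Ico_add_one_right_eq_Icc, Finset.sum_Ico_eq_sum_range]
      simp [add_comm 1]
    have e2 : ∑ n ∈ Finset.range (x + 1), f n = (q : ℝ) * T + R := by
      rw [← h1, Finset.sum_range_add, sum_range_mul_period f M hf q]
    have e3 : |R| ≤ C * M := by
      rw [hR]
      refine (Finset.abs_sum_le_sum_abs _ _).trans ?_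
      calc ∑ i ∈ Finset.range r, |f (q * M + i)|
          ≤ ∑ _i ∈ Finset.range r, C := Finset.sum_le_sum (fun i _ => hC _)
        _ = C * r := by simp [mul_comm]
        _ ≤ C * M := by
            apply mul_le_mul_of_nonneg_left _ hC0
            exact_mod_cast h2.le
    have e4 : |(q:ℝ) * T - (x:ℝ) * T / M| ≤ C * M := by
      have hqMr : ((q:ℝ) * M) + r = (x:ℝ) + 1 := by exact_mod_cast h1
      have hrM : (r:ℝ) < M := by exact_mod_cast h2
      have h1M : (1:ℝ) ≤ M := by exact_mod_cast hM
      have hr0 : (0:ℝ) ≤ (r:ℝ) := Nat.cast_nonneg r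
      have habs : |((q:ℝ) * M - x)| ≤ M := by
        rw [abs_le]
        constructor <;> linarith
      have heq : (q:ℝ) * T - (x:ℝ) * T / M = T * (((q:ℝ) * M - x) / M) := by
        field_simp
      rw [heq, abs_mul, abs_div, abs_of_pos hM']
      calc |T| * (|((q:ℝ) * M - x)| / M) ≤ (C * M) * (M / M) := by gcongr
        _ = C * M := by rw [div_self hM'.ne', mul_one]
    have hsplit : (∑ n ∈ Finset.Icc 1 x, f n) - (x : ℝ) * T / M
        = ((q:ℝ) * T - (x:ℝ) * T / M) + R + (- f 0) := by
      rw [e1, e2]; ring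
    rw [hsplit]
    calc |((q:ℝ) * T - (x:ℝ) * T / M) + R + (- f 0)|
        ≤ |((q:ℝ) * T - (x:ℝ) * T / M) + R| + |(- f 0)| := abs_add_le _ _
      _ ≤ |((q:ℝ) * T - (x:ℝ) * T / M)| + |R| + |f 0| := by
          rw [abs_neg]; linarith [abs_add_le ((q:ℝ) * T - (x:ℝ) * T / M) R]
      _ ≤ C * M + C * M + C := by gcongr; exact hC 0
      _ ≤ C * (2 * M + 2) := by nlinarith
  have hdiv : Filter.Tendsto (fun x : ℕ => C * (2 * M + 2) / x) Filter.atTop (nhds 0) :=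
    tendsto_const_div_atTop_nhds_zero_nat _
  rw [tendsto_iff_dist_tendsto_zero]
  apply squeeze_zero' (Filter.Eventually.of_forall (fun x => dist_nonneg)) ?_ hdiv
  filter_upwards [Filter.eventually_ge_atTop 1] with x hx
  have hx' : (0:ℝ) < x := by exact_mod_cast hx
  rw [Real.dist_eq]
  have hrw : (∑ n ∈ Finset.Icc 1 x, f n) / x - T / M
      = ((∑ n ∈ Finset.Icc 1 x, f n) - (x:ℝ) * T / M) / x := by
    rw [sub_div]
    congr 1
    rw [mul_div_assoc, mul_div_cancel_left₀ _ hx'.ne']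
  rw [hrw, abs_div, abs_of_pos hx']
  gcongr
  exact key x

lemma crt2 (a b : ℕ) (ha : 0 < a) (hb : 0 < b) (hab : Nat.Coprime a b)
    (f g : ℕ → ℝ) (hf : ∀ n, f n = f (n % a)) (hg : ∀ n, g n = g (n % b)) :
    ∑ n ∈ Finset.range (a * b), f n * g n
      = (∑ i ∈ Finset.range a, f i) * (∑ j ∈ Finset.range b, g j) := by
  rw [Finset.sum_mul_sum, ← Finset.sum_product']
  refine Finset.sum_nbij' (fun n => (n % a, n % b))
    (fun pr => (Nat.chineseRemainder hab pr.1 pr.2 : ℕ) % (a * b)) ?_ ?_ ?_ ?_ ?_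
  · intro n hn
    simp only [Finset.mem_product, Finset.mem_range]
    exact ⟨Nat.mod_lt _ ha, Nat.mod_lt _ hb⟩
  · intro pr hpr
    simp only [Finset.mem_range]
    exact Nat.mod_lt _ (Nat.mul_pos ha hb)
  · intro n hn
    simp only [Finset.mem_range] at hn
    set k := (Nat.chineseRemainder hab (n % a) (n % b) : ℕ) with hk
    obtain ⟨hk1, hk2⟩ := (Nat.chineseRemainder hab (n % a) (n % b)).prop
    have h1 : k ≡ n [MOD a] := hk1.trans (Nat.mod_mod_of_dvd n dvd_rfl ▸ (Nat.mod_modEq n a))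
    have h2 : k ≡ n [MOD b] := hk2.trans (Nat.mod_modEq n b)
    have h3 : k ≡ n [MOD a * b] := (Nat.modEq_and_modEq_iff_modEq_mul hab).mp ⟨h1, h2⟩
    calc k % (a * b) = n % (a * b) := h3
      _ = n := Nat.mod_eq_of_lt hn
  · intro pr hpr
    simp only [Finset.mem_product, Finset.mem_range] at hpr
    set k := (Nat.chineseRemainder hab pr.1 pr.2 : ℕ) with hk
    obtain ⟨hk1, hk2⟩ := (Nat.chineseRemainder hab pr.1 pr.2).prop
    have e1 : k % (a * b) % a = pr.1 := by
      rw [Nat.mod_mod_of_dvd _ (dvd_mul_right a b),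
        show k % a = pr.1 % a from hk1, Nat.mod_eq_of_lt hpr.1]
    have e2 : k % (a * b) % b = pr.2 := by
      rw [Nat.mod_mod_of_dvd _ (dvd_mul_left b a),
        show k % b = pr.2 % b from hk2, Nat.mod_eq_of_lt hpr.2]
    rw [Prod.ext_iff]
    exact ⟨e1, e2⟩
  · intro n hn
    rw [hf n, hg n]

lemma crt_many {ι : Type*} (S : Finset ι) (m : ι → ℕ) (hm : ∀ i ∈ S, 0 < m i)
    (hcop : ∀ i ∈ S, ∀ j ∈ S, i ≠ j → Nat.Coprime (m i) (m j))
    (f : ι → ℕ → ℝ) (hf : ∀ i ∈ S, ∀ n, f i n = f i (n % m i)) :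
    ∑ n ∈ Finset.range (∏ i ∈ S, m i), ∏ i ∈ S, f i n
      = ∏ i ∈ S, ∑ n ∈ Finset.range (m i), f i n := by
  classical
  induction S using Finset.induction_on with
  | empty => simp
  | @insert a s has ih =>
    have hms : 0 < ∏ i ∈ s, m i := Finset.prod_pos (fun i hi => hm i (Finset.mem_insert_of_mem hi))
    have hcop' : Nat.Coprime (m a) (∏ i ∈ s, m i) :=
      Nat.Coprime.prod_right (fun i hi =>
        hcop a (Finset.mem_insert_self a s) i (Finset.mem_insert_of_mem hi)
          (fun h => has (h ▸ hi)))
    have hg : ∀ n, (∏ i ∈ s, f i n) = ∏ i ∈ s, f i (n % ∏ j ∈ s, m j) := by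
      intro n
      refine Finset.prod_congr rfl (fun i hi => ?_)
      rw [hf i (Finset.mem_insert_of_mem hi) n,
        hf i (Finset.mem_insert_of_mem hi) (n % ∏ j ∈ s, m j),
        Nat.mod_mod_of_dvd _ (Finset.dvd_prod_of_mem m hi)]
    simp only [Finset.prod_insert has]
    have := crt2 (m a) (∏ i ∈ s, m i) (hm a (Finset.mem_insert_self a s)) hms hcop'
      (f a) (fun n => ∏ i ∈ s, f i n) (hf a (Finset.mem_insert_self a s)) hg
    beta_reduce at this
    rw [this,
      ih (fun i hi => hm i (Finset.mem_insert_of_mem hi))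
        (fun i hi j hj hij => hcop i (Finset.mem_insert_of_mem hi) j
          (Finset.mem_insert_of_mem hj) hij)
        (fun i hi => hf i (Finset.mem_insert_of_mem hi))]

-- truncated valuation
noncomputable def tval (p K n : ℕ) : ℕ := ((Finset.Icc 1 K).filter (fun j => p ^ j ∣ n)).card

lemma tval_mod (p K n : ℕ) : tval p K (n % p ^ K) = tval p K n := by
  unfold tval
  congr 1
  apply Finset.filter_congr
  intro j hj
  simp only [Finset.mem_Icc] at hj
  exact Nat.dvd_mod_iff (pow_dvd_pow p hj.2)

lemma tval_eq_factorization (p K n : ℕ) (hp : p.Prime) (hn : n ≠ 0) (h : ¬ p ^ K ∣ n) :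
    tval p K n = n.factorization p := by
  set v := n.factorization p with hv
  have hdvd_iff : ∀ j, p ^ j ∣ n ↔ j ≤ v :=
    fun j => Nat.Prime.pow_dvd_iff_le_factorization hp hn
  have hvK : v < K := by
    by_contra hcon
    exact h ((hdvd_iff K).mpr (le_of_not_gt hcon))
  unfold tval
  have : (Finset.Icc 1 K).filter (fun j => p ^ j ∣ n) = Finset.Icc 1 v := by
    ext j
    simp only [Finset.mem_filter, Finset.mem_Icc, hdvd_iff j]
    omega
  rw [this, Nat.card_Icc]
  omega

lemma tendsto_of_approx (a : ℕ → ℝ) (L : ℝ)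
    (h : ∀ ε : ℝ, 0 < ε → ∃ (b : ℕ → ℝ) (M : ℝ), Filter.Tendsto b Filter.atTop (nhds M) ∧
      (∀ᶠ x in Filter.atTop, |a x - b x| ≤ ε) ∧ |M - L| ≤ ε) :
    Filter.Tendsto a Filter.atTop (nhds L) := by
  rw [Metric.tendsto_atTop]
  intro ε hε
  obtain ⟨b, M, hb, hab, hML⟩ := h (ε / 4) (by positivity)
  obtain ⟨N1, hN1⟩ := (Metric.tendsto_atTop.mp hb) (ε / 4) (by positivity)
  obtain ⟨N2, hN2⟩ := Filter.eventually_atTop.mp hab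
  refine ⟨max N1 N2, fun x hx => ?_⟩
  have h1 := hN1 x (le_trans (le_max_left _ _) hx)
  have h2 := hN2 x (le_trans (le_max_right _ _) hx)
  rw [Real.dist_eq] at h1 ⊢
  calc |a x - L| ≤ |a x - b x| + |b x - M| + |M - L| := by
        have := abs_add_le (a x - b x) (b x - M)
        have := abs_add_le (a x - b x + (b x - M)) (M - L)
        have heq : a x - L = (a x - b x) + (b x - M) + (M - L) := by ring
        rw [heq]
        linarith
    _ < ε := by linarith
lemma abs_lim_diff_le (a b : ℕ → ℝ) (La Lb c : ℝ)
    (ha : Filter.Tendsto a Filter.atTop (nhds La))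
    (hb : Filter.Tendsto b Filter.atTop (nhds Lb))
    (h : ∀ᶠ x in Filter.atTop, |a x - b x| ≤ c) : |La - Lb| ≤ c :=
  le_of_tendsto ((ha.sub hb).abs) h

lemma prod_diff_le {ι : Type*} (s : Finset ι) (a b : ι → ℝ)
    (ha : ∀ i ∈ s, |a i| ≤ 1) (hb : ∀ i ∈ s, |b i| ≤ 1) :
    |∏ i ∈ s, a i - ∏ i ∈ s, b i| ≤ ∑ i ∈ s, |a i - b i| := by
  classical
  induction s using Finset.induction_on with
  | empty => simp
  | @insert j s hj ih =>
    rw [Finset.prod_insert hj, Finset.prod_insert hj, Finset.sum_insert hj]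
    have haj := ha j (Finset.mem_insert_self j s)
    have hbs : |∏ i ∈ s, b i| ≤ 1 := by
      rw [Finset.abs_prod]
      exact Finset.prod_le_one (fun i _ => abs_nonneg _)
        (fun i hi => hb i (Finset.mem_insert_of_mem hi))
    have ih' := ih (fun i hi => ha i (Finset.mem_insert_of_mem hi))
      (fun i hi => hb i (Finset.mem_insert_of_mem hi))
    have key : a j * ∏ i ∈ s, a i - b j * ∏ i ∈ s, b i
        = a j * (∏ i ∈ s, a i - ∏ i ∈ s, b i) + (a j - b j) * ∏ i ∈ s, b i := by ring
    rw [key]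
    calc |a j * (∏ i ∈ s, a i - ∏ i ∈ s, b i) + (a j - b j) * ∏ i ∈ s, b i|
        ≤ |a j| * |∏ i ∈ s, a i - ∏ i ∈ s, b i| + |a j - b j| * |∏ i ∈ s, b i| := by
          refine (abs_add_le _ _).trans ?_
          rw [abs_mul, abs_mul]
      _ ≤ 1 * (∑ i ∈ s, |a i - b i|) + |a j - b j| * 1 := by
          have h1 : |a j| * |∏ i ∈ s, a i - ∏ i ∈ s, b i| ≤ 1 * (∑ i ∈ s, |a i - b i|) :=
            mul_le_mul haj ih' (abs_nonneg _) zero_le_one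
          have h2 : |a j - b j| * |∏ i ∈ s, b i| ≤ |a j - b j| * 1 :=
            mul_le_mul_of_nonneg_left hbs (abs_nonneg _)
          linarith
      _ = |a j - b j| + ∑ i ∈ s, |a i - b i| := by ring

-- |∏ (1+u) - 1| ≤ ∏(1+|u|) - 1
lemma prod_one_add_sub_one_le {ι : Type*} (s : Finset ι) (u : ι → ℝ) :
    |∏ i ∈ s, (1 + u i) - 1| ≤ ∏ i ∈ s, (1 + |u i|) - 1 := by
  classical
  induction s using Finset.induction_on with
  | empty => simp
  | @insert j s hj ih =>
    rw [Finset.prod_insert hj, Finset.prod_insert hj]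
    have hR1 : (1:ℝ) ≤ ∏ i ∈ s, (1 + |u i|) := by
      calc (1:ℝ) = ∏ _i ∈ s, (1:ℝ) := by rw [Finset.prod_const_one]
        _ ≤ ∏ i ∈ s, (1 + |u i|) := Finset.prod_le_prod (fun i _ => zero_le_one)
            (fun i _ => le_add_of_nonneg_right (abs_nonneg _))
    have key : (1 + u j) * ∏ i ∈ s, (1 + u i) - 1
        = (1 + u j) * (∏ i ∈ s, (1 + u i) - 1) + u j := by ring
    rw [key]
    calc |(1 + u j) * (∏ i ∈ s, (1 + u i) - 1) + u j|
        ≤ |1 + u j| * |∏ i ∈ s, (1 + u i) - 1| + |u j| := by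
          refine (abs_add_le _ _).trans ?_
          rw [abs_mul]
      _ ≤ (1 + |u j|) * (∏ i ∈ s, (1 + |u i|) - 1) + |u j| := by
          have hx : |1 + u j| ≤ 1 + |u j| := by
            calc |1 + u j| ≤ |(1:ℝ)| + |u j| := abs_add_le _ _
              _ = 1 + |u j| := by rw [abs_one]
          have h0 : (0:ℝ) ≤ ∏ i ∈ s, (1 + |u i|) - 1 := by linarith
          have := mul_le_mul hx ih (abs_nonneg _) (by positivity : (0:ℝ) ≤ 1 + |u j|)
          linarith
      _ = (1 + |u j|) * ∏ i ∈ s, (1 + |u i|) - 1 := by ring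

lemma prod_one_add_le_exp {ι : Type*} (s : Finset ι) (u : ι → ℝ) (hu : ∀ i, 0 ≤ u i) :
    ∏ i ∈ s, (1 + u i) ≤ Real.exp (∑ i ∈ s, u i) := by
  rw [Real.exp_sum]
  apply Finset.prod_le_prod (fun i _ => by linarith [hu i])
  intro i _
  linarith [Real.add_one_le_exp (u i)]

lemma prod_one_add_le_one_add_two_sum {ι : Type*} (s : Finset ι) (u : ι → ℝ)
    (hu : ∀ i, 0 ≤ u i) (hs : ∑ i ∈ s, u i ≤ 1 / 2) :
    ∏ i ∈ s, (1 + u i) ≤ 1 + 2 * ∑ i ∈ s, u i := by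
  classical
  induction s using Finset.induction_on with
  | empty => simp
  | @insert j s hj ih =>
    rw [Finset.prod_insert hj, Finset.sum_insert hj]
    rw [Finset.sum_insert hj] at hs
    have hsum_nonneg : 0 ≤ ∑ i ∈ s, u i := Finset.sum_nonneg (fun i _ => hu i)
    have hs' : ∑ i ∈ s, u i ≤ 1 / 2 := by linarith [hu j]
    have ih' := ih hs'
    have h2T : 2 * ∑ i ∈ s, u i ≤ 1 := by linarith
    calc (1 + u j) * ∏ i ∈ s, (1 + u i) ≤ (1 + u j) * (1 + 2 * ∑ i ∈ s, u i) := by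
          gcongr
          linarith [hu j]
      _ = 1 + 2 * ∑ i ∈ s, u i + u j * (1 + 2 * ∑ i ∈ s, u i) := by ring
      _ ≤ 1 + 2 * ∑ i ∈ s, u i + u j * 2 := by
          gcongr
          · exact hu j
          · linarith
      _ = 1 + 2 * (u j + ∑ i ∈ s, u i) := by ring

-- existence of HasProd for 1 + u with summable |u|
lemma hasProd_one_add {ι : Type*} (u : ι → ℝ) (hu : Summable fun i => |u i|) :
    ∃ κ : ℝ, HasProd (fun i => 1 + u i) κ := by
  classical
  set U := ∑' i, |u i| with hU
  have hU0 : 0 ≤ U := tsum_nonneg (fun i => abs_nonneg _)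
  set B := Real.exp U with hB
  have hB0 : 0 < B := Real.exp_pos U
  have hbound : ∀ s : Finset ι, |∏ i ∈ s, (1 + u i)| ≤ B := by
    intro s
    rw [Finset.abs_prod]
    calc ∏ i ∈ s, |1 + u i| ≤ ∏ i ∈ s, (1 + |u i|) := by
          apply Finset.prod_le_prod (fun i _ => abs_nonneg _)
          intro i _
          calc |1 + u i| ≤ |(1:ℝ)| + |u i| := abs_add_le _ _
            _ = 1 + |u i| := by rw [abs_one]
      _ ≤ Real.exp (∑ i ∈ s, |u i|) := prod_one_add_le_exp s _ (fun i => abs_nonneg _)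
      _ ≤ B := Real.exp_le_exp.mpr (Summable.sum_le_tsum s (fun i _ => abs_nonneg _) hu)
  have hcauchy : CauchySeq (fun s : Finset ι => ∏ i ∈ s, (1 + u i)) := by
    rw [Metric.cauchySeq_iff]
    intro ε hε
    set δ := min (1/2) (ε / (4 * B + 1)) with hδ
    have hδ0 : 0 < δ := by
      apply lt_min (by norm_num)
      positivity
    obtain ⟨s₀, hs₀⟩ := hu.vanishing (Metric.ball_mem_nhds 0 hδ0)
    refine ⟨s₀, fun s hs t ht => ?_⟩
    -- both s, t ⊇ s₀
    have key : ∀ w : Finset ι, s₀ ⊆ w → ∀ w' : Finset ι, w ⊆ w' →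
        dist (∏ i ∈ w, (1 + u i)) (∏ i ∈ w', (1 + u i)) ≤ 2 * B * δ := by
      intro w hw w' hww'
      have hsplit : ∏ i ∈ w', (1 + u i) = (∏ i ∈ w' \ w, (1 + u i)) * ∏ i ∈ w, (1 + u i) :=
        (Finset.prod_sdiff hww').symm
      rw [Real.dist_eq, hsplit]
      have hdisj : Disjoint s₀ (w' \ w) := by
        apply Finset.disjoint_right.mpr
        intro i hi
        exact fun hi' => (Finset.mem_sdiff.mp hi).2 (hw hi')
      have hsum : ∑ i ∈ w' \ w, |u i| < δ := by
        have hmem := hs₀ (w' \ w) hdisj.symm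
        rw [Metric.mem_ball, Real.dist_eq, sub_zero] at hmem
        exact (le_abs_self _).trans_lt hmem
      have hδhalf : δ ≤ 1 / 2 := min_le_left _ _
      have hQ : |∏ i ∈ w' \ w, (1 + u i) - 1| ≤ 2 * δ := by
        refine (prod_one_add_sub_one_le _ _).trans ?_
        have := prod_one_add_le_one_add_two_sum (w' \ w) (fun i => |u i|)
          (fun i => abs_nonneg _) (by linarith)
        linarith
      calc |∏ i ∈ w, (1 + u i) - (∏ i ∈ w' \ w, (1 + u i)) * ∏ i ∈ w, (1 + u i)|
          = |∏ i ∈ w, (1 + u i)| * |1 - ∏ i ∈ w' \ w, (1 + u i)| := by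
            rw [← abs_mul]; congr 1; ring
        _ ≤ B * (2 * δ) := by
            apply mul_le_mul (hbound w) _ (abs_nonneg _) hB0.le
            rw [abs_sub_comm]
            exact hQ
        _ = 2 * B * δ := by ring
    calc dist (∏ i ∈ s, (1 + u i)) (∏ i ∈ t, (1 + u i))
        ≤ dist (∏ i ∈ s, (1 + u i)) (∏ i ∈ s ∪ t, (1 + u i))
          + dist (∏ i ∈ s ∪ t, (1 + u i)) (∏ i ∈ t, (1 + u i)) := dist_triangle _ _ _
      _ ≤ 2 * B * δ + 2 * B * δ := by
          refine add_le_add (key s hs _ Finset.subset_union_left) ?_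
          rw [dist_comm]
          exact key t ht _ Finset.subset_union_right
      _ ≤ 4 * B * (ε / (4 * B + 1)) := by
          have hδr : δ ≤ ε / (4 * B + 1) := min_le_right _ _
          nlinarith
      _ < ε := by
          have heq : 4 * B * (ε / (4 * B + 1)) = (4 * B) / (4 * B + 1) * ε := by ring
          rw [heq]
          have hlt : (4 * B) / (4 * B + 1) < 1 := by
            rw [div_lt_one (by positivity)]
            linarith
          nlinarith
  obtain ⟨κ, hκ⟩ := cauchySeq_tendsto_of_complete hcauchy
  exact ⟨κ, hκ⟩

-- density ⇒ cesaro limit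
lemma hasDensity_nonneg {A : Set ℕ} {d : ℝ} (h : HasDensity A d) : 0 ≤ d :=
  ge_of_tendsto h (Filter.Eventually.of_forall (fun x => by positivity))

lemma hasDensity_le_one {A : Set ℕ} {d : ℝ} (h : HasDensity A d) : d ≤ 1 := by
  apply le_of_tendsto h
  filter_upwards [Filter.eventually_ge_atTop 1] with x hx
  have hx' : (0:ℝ) < x := by exact_mod_cast hx
  rw [div_le_one hx']
  have : countIn A x ≤ x := by
    unfold countIn
    calc ((Finset.Icc 1 x).filter (fun n => n ∈ A)).card ≤ (Finset.Icc 1 x).card :=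
          Finset.card_filter_le _ _
      _ = x := by rw [Nat.card_Icc]; omega
  exact_mod_cast this

lemma cesaro_of_density (P : Set ℕ) (H : Finset ℕ) (d : ℝ)
    (h : HasDensity (NPH P H) d) :
    Filter.Tendsto (cesaroAvg P H) Filter.atTop (nhds (1 - 2 * d)) := by
  have hsum : ∀ x : ℕ, ∑ n ∈ Finset.Icc 1 x, LambdaPH P H n
      = (x : ℝ) - 2 * (countIn (NPH P H) x : ℝ) := by
    intro x
    have hterm : ∀ n ∈ Finset.Icc 1 x, LambdaPH P H n
        = if n ∈ NPH P H then (-1 : ℝ) else 1 := by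
      intro n _
      rcases LambdaPH_cases P H n with h1 | h1
      · rw [if_neg, h1]
        intro hmem
        rw [NPH, Set.mem_setOf_eq] at hmem
        rw [h1] at hmem
        norm_num at hmem
      · rw [if_pos, h1]
        exact h1
    rw [Finset.sum_congr rfl hterm, Finset.sum_ite, Finset.sum_const, Finset.sum_const]
    have hcards : ((Finset.Icc 1 x).filter (fun n => ¬ n ∈ NPH P H)).card
        = x - countIn (NPH P H) x := by
      have halt := Finset.card_filter_add_card_filter_not
        (s := Finset.Icc 1 x) (p := fun n => n ∈ NPH P H)
      rw [Nat.card_Icc] at halt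
      unfold countIn
      omega
    rw [hcards]
    have hle : countIn (NPH P H) x ≤ x := by
      unfold countIn
      calc _ ≤ (Finset.Icc 1 x).card := Finset.card_filter_le _ _
        _ = x := by rw [Nat.card_Icc]; omega
    have hfil : ((Finset.Icc 1 x).filter (fun n => n ∈ NPH P H)).card
        = countIn (NPH P H) x := rfl
    rw [hfil]
    simp only [nsmul_eq_mul, mul_one, mul_neg]
    rw [Nat.cast_sub hle]
    ring
  have : cesaroAvg P H = fun x : ℕ => ((x:ℝ) - 2 * (countIn (NPH P H) x : ℝ)) / x := by
    funext x
    rw [cesaroAvg, hsum]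
  rw [this]
  have hres : Filter.Tendsto (fun x : ℕ => (x:ℝ)/x - 2 * ((countIn (NPH P H) x : ℝ)/x))
      Filter.atTop (nhds (1 - 2 * d)) := by
    have h1 : Filter.Tendsto (fun x : ℕ => (x:ℝ)/x) Filter.atTop (nhds 1) := by
      apply Filter.Tendsto.congr' _ tendsto_const_nhds
      filter_upwards [Filter.eventually_ge_atTop 1] with x hx
      have hx' : (0:ℝ) < x := by exact_mod_cast hx
      rw [div_self hx'.ne']
    exact h1.sub ((h.const_mul 2).congr (fun x => by ring))
  apply hres.congr
  intro x
  rw [sub_div]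
  congr 1
  ring

-- counting lemma
lemma card_filter_ne_le (x : ℕ) (a b : ℕ → ℝ) (S' : Finset ℕ) (H : Finset ℕ) (dv : ℕ → ℕ)
    (hdv : ∀ p ∈ S', 0 < dv p)
    (heq : ∀ n ∈ Finset.Icc 1 x, (∀ p ∈ S', ∀ h ∈ H, ¬ dv p ∣ n + h) → a n = b n) :
    (((Finset.Icc 1 x)).filter (fun n => a n ≠ b n)).card
      ≤ ∑ p ∈ S', ∑ h ∈ H, (x + h) / dv p := by
  have hsub : ((Finset.Icc 1 x)).filter (fun n => a n ≠ b n)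
      ⊆ S'.biUnion (fun p => H.biUnion (fun h => (Finset.Icc 1 x).filter (fun n => dv p ∣ n + h))) := by
    intro n hn
    rw [Finset.mem_filter] at hn
    obtain ⟨hn1, hn2⟩ := hn
    by_contra hcon
    apply hn2
    apply heq n hn1
    intro p hp h hh hdvd
    apply hcon
    rw [Finset.mem_biUnion]
    exact ⟨p, hp, by rw [Finset.mem_biUnion]; exact ⟨h, hh, by rw [Finset.mem_filter]; exact ⟨hn1, hdvd⟩⟩⟩
  calc (((Finset.Icc 1 x)).filter (fun n => a n ≠ b n)).card
      ≤ (S'.biUnion (fun p => H.biUnion (fun h => (Finset.Icc 1 x).filter (fun n => dv p ∣ n + h)))).card :=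
        Finset.card_le_card hsub
    _ ≤ ∑ p ∈ S', (H.biUnion (fun h => (Finset.Icc 1 x).filter (fun n => dv p ∣ n + h))).card :=
        Finset.card_biUnion_le
    _ ≤ ∑ p ∈ S', ∑ h ∈ H, ((Finset.Icc 1 x).filter (fun n => dv p ∣ n + h)).card :=
        Finset.sum_le_sum (fun p _ => Finset.card_biUnion_le)
    _ ≤ ∑ p ∈ S', ∑ h ∈ H, (x + h) / dv p :=
        Finset.sum_le_sum (fun p hp => Finset.sum_le_sum (fun h _ => count_dvd_le _ _ _ (hdv p hp)))

-- the main eventual bound on cesaro differences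
lemma cesaro_diff_eventually (H : Finset ℕ) (a b : ℕ → ℝ)
    (ha : ∀ n, |a n| ≤ 1) (hb : ∀ n, |b n| ≤ 1)
    (S' : ℕ → Finset ℕ) (dv : ℕ → ℕ) (hdv : ∀ x, ∀ p ∈ S' x, 0 < dv p)
    (c : ℝ) (hc : ∀ x, ∑ p ∈ S' x, (1 : ℝ)/(dv p) ≤ c)
    (hm : ℕ) (hHm : ∀ h ∈ H, h ≤ hm)
    (heq : ∀ x, ∀ n ∈ Finset.Icc 1 x, (∀ p ∈ S' x, ∀ h ∈ H, ¬ dv p ∣ n + h) → a n = b n) :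
    ∀ᶠ x : ℕ in Filter.atTop,
      |(∑ n ∈ Finset.Icc 1 x, a n)/x - (∑ n ∈ Finset.Icc 1 x, b n)/x|
        ≤ 4 * H.card * c := by
  filter_upwards [Filter.eventually_ge_atTop (max 1 hm)] with x hx
  have hx1 : 1 ≤ x := le_trans (le_max_left _ _) hx
  have hxm : hm ≤ x := le_trans (le_max_right _ _) hx
  have hx' : (0:ℝ) < x := by exact_mod_cast hx1
  have hcard := card_filter_ne_le x a b (S' x) H dv (hdv x) (heq x)
  have habs := sum_abs_diff_le (Finset.Icc 1 x) a b ha hb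
  rw [div_sub_div_same, abs_div, abs_of_pos hx']
  rw [div_le_iff₀ hx']
  have hcast : ((((Finset.Icc 1 x)).filter (fun n => a n ≠ b n)).card : ℝ)
      ≤ ∑ p ∈ S' x, ∑ h ∈ H, ((x:ℝ) + h) / dv p := by
    calc ((((Finset.Icc 1 x)).filter (fun n => a n ≠ b n)).card : ℝ)
        ≤ ((∑ p ∈ S' x, ∑ h ∈ H, (x + h) / dv p : ℕ) : ℝ) := by exact_mod_cast hcard
      _ ≤ ∑ p ∈ S' x, ∑ h ∈ H, ((x:ℝ) + h) / dv p := by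
          push_cast
          refine Finset.sum_le_sum (fun p _ => Finset.sum_le_sum (fun h _ => ?_))
          calc ((((x + h) / dv p : ℕ)) : ℝ) ≤ ((x + h : ℕ) : ℝ) / (dv p : ℝ) := Nat.cast_div_le
            _ = ((x:ℝ) + h) / dv p := by push_cast; ring
  have hterm : ∀ p ∈ S' x, ∀ h ∈ H, ((x:ℝ) + h) / (dv p : ℝ) ≤ 2 * (x:ℝ) / (dv p : ℝ) := by
    intro p hp h hh
    have hhm : (h:ℝ) ≤ x := by
      have := le_trans (hHm h hh) hxm
      exact_mod_cast this
    have hdvp : (0:ℝ) < (dv p : ℝ) := by exact_mod_cast hdv x p hp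
    exact (div_le_div_iff_of_pos_right hdvp).mpr (by linarith)
  have hsum2 : ∑ p ∈ S' x, ∑ h ∈ H, ((x:ℝ) + h) / (dv p : ℝ)
      ≤ ∑ p ∈ S' x, ∑ h ∈ H, 2 * (x:ℝ) / (dv p : ℝ) :=
    Finset.sum_le_sum (fun p hp => Finset.sum_le_sum (fun h hh => hterm p hp h hh))
  have hsum3 : ∑ p ∈ S' x, ∑ h ∈ H, 2 * (x:ℝ) / (dv p : ℝ)
      = 2 * (x:ℝ) * ((H.card : ℝ) * ∑ p ∈ S' x, (1:ℝ) / (dv p : ℝ)) := by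
    calc ∑ p ∈ S' x, ∑ h ∈ H, 2 * (x:ℝ) / (dv p : ℝ)
        = ∑ p ∈ S' x, (H.card : ℝ) * (2 * (x:ℝ) / (dv p : ℝ)) := by
          refine Finset.sum_congr rfl (fun p hp => ?_)
          rw [Finset.sum_const, nsmul_eq_mul]
      _ = 2 * (x:ℝ) * ((H.card : ℝ) * ∑ p ∈ S' x, (1:ℝ) / (dv p : ℝ)) := by
          rw [Finset.mul_sum, Finset.mul_sum]
          refine Finset.sum_congr rfl (fun p hp => ?_)
          ring
  have hS := hc x
  have hHd : (0:ℝ) ≤ (H.card : ℝ) := Nat.cast_nonneg _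
  have hfin : 2*(x:ℝ)*((H.card:ℝ) * (∑ p ∈ S' x, (1:ℝ)/(dv p : ℝ)))
      ≤ 2*(x:ℝ)*((H.card:ℝ)*c) := by
    have hmul : (H.card:ℝ) * (∑ p ∈ S' x, (1:ℝ)/(dv p : ℝ)) ≤ (H.card:ℝ)*c :=
      mul_le_mul_of_nonneg_left hS hHd
    apply mul_le_mul_of_nonneg_left hmul (by positivity)
  calc |∑ n ∈ Finset.Icc 1 x, a n - ∑ n ∈ Finset.Icc 1 x, b n|
      ≤ 2 * ((((Finset.Icc 1 x)).filter (fun n => a n ≠ b n)).card : ℝ) := habs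
    _ ≤ 2 * (∑ p ∈ S' x, ∑ h ∈ H, ((x:ℝ) + h) / (dv p : ℝ)) := by linarith
    _ ≤ 2 * (2 * (x:ℝ) * ((H.card : ℝ) * ∑ p ∈ S' x, (1:ℝ) / (dv p : ℝ))) := by
        linarith [hsum2, hsum3.le]
    _ ≤ 2 * (2*(x:ℝ)*((H.card:ℝ)*c)) := by linarith
    _ = 4 * H.card * c * x := by ring

theorem finite_case (H : Finset ℕ) (S : Finset ℕ) (hSP : ∀ p ∈ S, Nat.Prime p)
    (η : ℕ → ℝ) (hη : ∀ p ∈ S, HasDensity (NPH {p} H) (η p)) :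
    Filter.Tendsto (cesaroAvg ↑S H) Filter.atTop (nhds (∏ p ∈ S, (1 - 2 * η p))) := by
  classical
  set hmax := H.sup id with hhmax
  have hHm : ∀ h ∈ H, h ≤ hmax := fun h hh => Finset.le_sup (f := id) hh
  apply tendsto_of_approx
  intro ε hε
  set D : ℝ := 4 * H.card * S.card + 1 with hD
  have hD0 : 0 < D := by positivity
  obtain ⟨K, hK⟩ := exists_pow_lt_of_lt_one (show (0:ℝ) < ε / D by positivity)
    (show (1:ℝ)/2 < 1 by norm_num)
  set m : ℕ → ℕ := fun p => p ^ K with hmdef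
  have hm_pos : ∀ p ∈ S, 0 < m p := fun p hp => pow_pos (hSP p hp).pos K
  -- the numeric bound
  have hsum_small : ∑ p ∈ S, (1:ℝ)/(m p : ℝ) ≤ S.card * (1/2)^K := by
    calc ∑ p ∈ S, (1:ℝ)/(m p : ℝ) ≤ ∑ _p ∈ S, ((1:ℝ)/2)^K := by
          refine Finset.sum_le_sum (fun p hp => ?_)
          have h2p : (2:ℝ)^K ≤ (p:ℝ)^K := by
            apply pow_le_pow_left₀ (by norm_num)
            exact_mod_cast (hSP p hp).two_le
          have hpK : (0:ℝ) < (p:ℝ)^K := by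
            have : (0:ℝ) < (p:ℝ) := by exact_mod_cast (hSP p hp).pos
            positivity
          rw [div_pow, one_pow]
          have : ((m p : ℕ) : ℝ) = (p:ℝ)^K := by rw [hmdef]; push_cast; ring
          rw [this]
          apply one_div_le_one_div_of_le (by norm_num) h2p
      _ = S.card * (1/2)^K := by rw [Finset.sum_const, nsmul_eq_mul]
  have hQ : 4 * (H.card : ℝ) * (∑ p ∈ S, (1:ℝ)/(m p : ℝ)) ≤ ε := by
    have h1 : 4 * (H.card : ℝ) * (∑ p ∈ S, (1:ℝ)/(m p : ℝ))
        ≤ 4 * (H.card : ℝ) * ((S.card : ℝ) * (1/2)^K) := by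
      apply mul_le_mul_of_nonneg_left hsum_small (by positivity)
    have h2 : 4 * (H.card : ℝ) * ((S.card : ℝ) * (1/2)^K) ≤ D * ((1:ℝ)/2)^K := by
      have : (0:ℝ) ≤ (1/2:ℝ)^K := by positivity
      rw [hD]
      nlinarith
    have h3 : D * ((1:ℝ)/2)^K ≤ D * (ε / D) := mul_le_mul_of_nonneg_left hK.le hD0.le
    have h4 : D * (ε / D) = ε := by field_simp
    linarith
  -- definitions
  set fp : ℕ → ℕ → ℝ := fun p n => ∏ h ∈ H, (-1 : ℝ)^(tval p K (n + h)) with hfp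
  set F : ℕ → ℝ := fun n => ∏ p ∈ S, fp p n with hF
  set M : ℕ := ∏ p ∈ S, m p with hM
  have hM_pos : 0 < M := Finset.prod_pos hm_pos
  have habs_neg_pow : ∀ k : ℕ, |(-1 : ℝ)^k| = 1 := by
    intro k
    rw [abs_pow, abs_neg, abs_one, one_pow]
  have hfp_abs : ∀ p n, |fp p n| ≤ 1 := by
    intro p n
    rw [hfp, Finset.abs_prod]
    apply Finset.prod_le_one (fun h _ => abs_nonneg _)
    intro h _
    rw [habs_neg_pow]
  have hF_abs : ∀ n, |F n| ≤ 1 := by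
    intro n
    rw [hF, Finset.abs_prod]
    exact Finset.prod_le_one (fun p _ => abs_nonneg _) (fun p _ => hfp_abs p n)
  have hfp_per : ∀ p, ∀ n, fp p n = fp p (n % m p) := by
    intro p n
    rw [hfp]
    refine Finset.prod_congr rfl (fun h _ => ?_)
    have e1 : (n + h) % p^K = ((n % p^K) + h) % p^K := by
      rw [Nat.add_mod n h, Nat.add_mod (n % p^K) h, Nat.mod_mod_of_dvd n dvd_rfl]
    rw [← tval_mod p K (n + h), e1, tval_mod]
  have hF_per : ∀ n, F n = F (n % M) := by
    intro n
    rw [hF]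
    refine Finset.prod_congr rfl (fun p hp => ?_)
    rw [hfp_per p n, hfp_per p (n % M), Nat.mod_mod_of_dvd _ (Finset.dvd_prod_of_mem m hp)]
  have hcop : ∀ p ∈ S, ∀ q ∈ S, p ≠ q → Nat.Coprime (m p) (m q) := by
    intro p hp q hq hne
    exact Nat.Coprime.pow K K ((Nat.coprime_primes (hSP p hp) (hSP q hq)).mpr hne)
  -- single-prime identification
  have hsingle_eq : ∀ p, p.Prime → ∀ x : ℕ, ∀ n ∈ Finset.Icc 1 x,
      (∀ q ∈ ({p} : Finset ℕ), ∀ h ∈ H, ¬ m q ∣ n + h) → fp p n = LambdaPH {p} H n := by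
    intro p hp x n hn hcond
    rw [Finset.mem_Icc] at hn
    rw [hfp, LambdaPH]
    refine Finset.prod_congr rfl (fun h hh => ?_)
    rw [lambdaP, OmegaP_singleton, tval_eq_factorization p K (n + h) hp (by omega)
      (hcond p (Finset.mem_singleton_self p) h hh)]
  -- finite-set identification
  have hS_eq : ∀ x : ℕ, ∀ n ∈ Finset.Icc 1 x,
      (∀ p ∈ S, ∀ h ∈ H, ¬ m p ∣ n + h) → LambdaPH ↑S H n = F n := by
    intro x n hn hcond
    rw [Finset.mem_Icc] at hn
    rw [LambdaPH, hF]
    have e1 : ∀ h ∈ H, lambdaP ↑S (n + h) = ∏ p ∈ S, (-1 : ℝ)^(tval p K (n + h)) := by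
      intro h hh
      rw [lambdaP_finset]
      refine Finset.prod_congr rfl (fun p hp => ?_)
      rw [tval_eq_factorization p K (n + h) (hSP p hp) (by omega) (hcond p hp h hh)]
    rw [Finset.prod_congr rfl e1, Finset.prod_comm]
  -- mean values per prime
  set meanp : ℕ → ℝ := fun p => (∑ n ∈ Finset.range (m p), fp p n) / (m p) with hmeanp
  have hmean_tendsto : ∀ p ∈ S, Filter.Tendsto
      (fun x : ℕ => (∑ n ∈ Finset.Icc 1 x, fp p n) / x) Filter.atTop (nhds (meanp p)) :=
    fun p hp => cesaro_of_periodic (fp p) (m p) (hm_pos p hp) (hfp_per p) 1 (hfp_abs p)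
  have hmean_close : ∀ p ∈ S, |meanp p - (1 - 2 * η p)| ≤ 4 * H.card * ((1:ℝ)/(m p)) := by
    intro p hp
    apply abs_lim_diff_le _ _ _ _ _ (hmean_tendsto p hp)
      (cesaro_of_density {p} H (η p) (hη p hp))
    have := cesaro_diff_eventually H (fp p) (LambdaPH {p} H) (hfp_abs p) (LambdaPH_abs_le {p} H)
      (fun _ => {p}) m (fun x q hq => by rw [Finset.mem_singleton] at hq; rw [hq]; exact hm_pos p hp)
      ((1:ℝ)/(m p)) (fun x => by rw [Finset.sum_singleton]) hmax hHm
      (fun x n hn hcond => hsingle_eq p (hSP p hp) x n hn hcond)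
    exact this
  -- abs bounds on the limit factors
  have hmean_abs : ∀ p ∈ S, |meanp p| ≤ 1 := by
    intro p hp
    rw [hmeanp]
    have hmp : (0:ℝ) < (m p : ℝ) := by exact_mod_cast hm_pos p hp
    rw [abs_div, abs_of_pos hmp, div_le_one hmp]
    calc |∑ n ∈ Finset.range (m p), fp p n| ≤ ∑ n ∈ Finset.range (m p), |fp p n| :=
          Finset.abs_sum_le_sum_abs _ _
      _ ≤ ∑ _n ∈ Finset.range (m p), (1:ℝ) := Finset.sum_le_sum (fun n _ => hfp_abs p n)
      _ = (m p : ℝ) := by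
          rw [Finset.sum_const, nsmul_eq_mul, mul_one, Finset.card_range]
  have heta_abs : ∀ p ∈ S, |1 - 2 * η p| ≤ 1 := by
    intro p hp
    have h0 := hasDensity_nonneg (hη p hp)
    have h1 := hasDensity_le_one (hη p hp)
    rw [abs_le]
    constructor <;> linarith
  -- the three pieces
  refine ⟨fun x => (∑ n ∈ Finset.Icc 1 x, F n) / x, (∑ n ∈ Finset.range M, F n) / M,
    cesaro_of_periodic F M hM_pos hF_per 1 hF_abs, ?_, ?_⟩
  · -- eventual closeness
    have hev := cesaro_diff_eventually H (LambdaPH ↑S H) F (LambdaPH_abs_le ↑S H) hF_abs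
      (fun _ => S) m (fun x => hm_pos) (∑ p ∈ S, (1:ℝ)/(m p : ℝ)) (fun x => le_refl _)
      hmax hHm hS_eq
    filter_upwards [hev] with x hx
    calc |cesaroAvg ↑S H x - (∑ n ∈ Finset.Icc 1 x, F n) / x|
        = |(∑ n ∈ Finset.Icc 1 x, LambdaPH ↑S H n)/x - (∑ n ∈ Finset.Icc 1 x, F n) / x| := rfl
      _ ≤ 4 * H.card * (∑ p ∈ S, (1:ℝ)/(m p : ℝ)) := hx
      _ ≤ ε := hQ
  · -- closeness of the limits
    have hcrt := crt_many S m hm_pos hcop fp (fun p _ n => hfp_per p n)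
    have hMval : (∑ n ∈ Finset.range M, F n) / M = ∏ p ∈ S, meanp p := by
      rw [hM, hF, hcrt, Nat.cast_prod, ← Finset.prod_div_distrib]
    rw [hMval]
    refine (prod_diff_le S meanp (fun p => 1 - 2 * η p) hmean_abs heta_abs).trans ?_
    calc ∑ p ∈ S, |meanp p - (1 - 2 * η p)| ≤ ∑ p ∈ S, 4 * H.card * ((1:ℝ)/(m p)) :=
          Finset.sum_le_sum hmean_close
      _ = 4 * H.card * (∑ p ∈ S, (1:ℝ)/(m p : ℝ)) := by rw [Finset.mul_sum]
      _ ≤ ε := hQ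

-- if no p | n+h then LambdaPH {p} H n = 1
lemma LambdaPH_singleton_eq_one (p : ℕ) (H : Finset ℕ) (n : ℕ)
    (h : ∀ h' ∈ H, ¬ p ∣ n + h') : LambdaPH {p} H n = 1 := by
  rw [LambdaPH]
  apply Finset.prod_eq_one
  intro h' hh'
  rw [lambdaP, OmegaP_singleton, Nat.factorization_eq_zero_of_not_dvd (h h' hh'), pow_zero]

-- eta upper bound
lemma eta_le (H : Finset ℕ) (p : ℕ) (hp : Nat.Prime p) (e : ℝ)
    (h : HasDensity (NPH {p} H) e) : e ≤ 4 * H.card * (1 / p) := by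
  apply le_of_tendsto h
  set hmax := H.sup id with hhm
  filter_upwards [Filter.eventually_ge_atTop (max 1 hmax)] with x hx
  have hx1 : 1 ≤ x := le_trans (le_max_left _ _) hx
  have hxm : hmax ≤ x := le_trans (le_max_right _ _) hx
  have hx' : (0:ℝ) < x := by exact_mod_cast hx1
  have hp' : (0:ℝ) < p := by exact_mod_cast hp.pos
  have hsub : (Finset.Icc 1 x).filter (fun n => n ∈ NPH {p} H)
      ⊆ H.biUnion (fun h' => (Finset.Icc 1 x).filter (fun n => p ∣ n + h')) := by
    intro n hn
    rw [Finset.mem_filter] at hn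
    by_contra hcon
    have : ∀ h' ∈ H, ¬ p ∣ n + h' := by
      intro h' hh' hdvd
      apply hcon
      rw [Finset.mem_biUnion]
      exact ⟨h', hh', by rw [Finset.mem_filter]; exact ⟨hn.1, hdvd⟩⟩
    have h1 := LambdaPH_singleton_eq_one p H n this
    have h2 := hn.2
    rw [NPH, Set.mem_setOf_eq, h1] at h2
    norm_num at h2
  have hcount : (countIn (NPH {p} H) x : ℝ) ≤ ∑ h' ∈ H, ((x:ℝ) + h') / p := by
    have h1 : countIn (NPH {p} H) x ≤ ∑ h' ∈ H, (x + h') / p := by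
      calc countIn (NPH {p} H) x
          ≤ (H.biUnion (fun h' => (Finset.Icc 1 x).filter (fun n => p ∣ n + h'))).card :=
            Finset.card_le_card hsub
        _ ≤ ∑ h' ∈ H, ((Finset.Icc 1 x).filter (fun n => p ∣ n + h')).card :=
            Finset.card_biUnion_le
        _ ≤ ∑ h' ∈ H, (x + h') / p :=
            Finset.sum_le_sum (fun h' _ => count_dvd_le _ _ _ hp.pos)
    calc (countIn (NPH {p} H) x : ℝ) ≤ ((∑ h' ∈ H, (x + h') / p : ℕ) : ℝ) := by exact_mod_cast h1
      _ ≤ ∑ h' ∈ H, ((x:ℝ) + h') / p := by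
          push_cast
          refine Finset.sum_le_sum (fun h' _ => ?_)
          calc (((x + h') / p : ℕ) : ℝ) ≤ ((x + h' : ℕ):ℝ) / (p:ℝ) := Nat.cast_div_le
            _ = ((x:ℝ) + h') / p := by push_cast; ring
  rw [div_le_iff₀ hx']
  refine hcount.trans ?_
  have hbound : ∀ h' ∈ H, ((x:ℝ) + h') / p ≤ 2 * x / p := by
    intro h' hh'
    have : (h' : ℝ) ≤ x := by exact_mod_cast le_trans (Finset.le_sup (f := id) hh') hxm
    exact (div_le_div_iff_of_pos_right hp').mpr (by linarith)
  calc ∑ h' ∈ H, ((x:ℝ) + h') / p ≤ ∑ _h' ∈ H, 2 * (x:ℝ) / p :=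
        Finset.sum_le_sum hbound
    _ = H.card * (2 * (x:ℝ) / p) := by rw [Finset.sum_const, nsmul_eq_mul]
    _ ≤ 4 * H.card * (1/p) * x := by
        have e : (H.card:ℝ) * (2*(x:ℝ)/(p:ℝ)) = 2*((H.card:ℝ)*(1/(p:ℝ))*(x:ℝ)) := by ring
        have e2 : 4*(H.card:ℝ)*(1/(p:ℝ))*(x:ℝ) = 4*((H.card:ℝ)*(1/(p:ℝ))*(x:ℝ)) := by ring
        rw [e, e2]
        have hnn : 0 ≤ (H.card:ℝ)*(1/(p:ℝ))*(x:ℝ) := by positivity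
        linarith


/-- If `P` is a small set of primes, then `κ_P^H` exists and equals the
(convergent) product `∏_{p ∈ P} (1 - 2 η_p^H)`. -/
theorem stmt_1 (H : Finset ℕ) (hH : H.Nonempty) (P : Set ℕ)
    (hP : ∀ q ∈ P, Nat.Prime q) (hsmall : SmallSet P)
    (η : ℕ → ℝ) (hη : ∀ p ∈ P, HasDensity (NPH {p} H) (η p)) :
    ∃ κ : ℝ, HasProd (fun p : P => 1 - 2 * η p) κ ∧
      Filter.Tendsto (cesaroAvg P H) Filter.atTop (nhds κ) := by
  classical
  set hmax := H.sup id with hhm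
  have hHm : ∀ h ∈ H, h ≤ hmax := fun h hh => Finset.le_sup (f := id) hh
  -- summability of 2η over P
  set u : P → ℝ := fun q => -(2 * η q) with hu
  have husum : Summable fun q : P => |u q| := by
    refine Summable.of_nonneg_of_le (fun q => abs_nonneg _) ?_
      (hsmall.mul_left (8 * (H.card:ℝ)))
    intro q
    have h0 := hasDensity_nonneg (hη q q.prop)
    have h1 := eta_le H q (hP q q.prop) (η q) (hη q q.prop)
    rw [hu]
    show |(-(2 * η ↑q))| ≤ 8 * (H.card:ℝ) * ((1:ℝ) / ((q:ℕ):ℝ))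
    rw [abs_neg, abs_of_nonneg (by linarith)]
    calc 2 * η ↑q ≤ 2 * (4 * H.card * (1/((q:ℕ):ℝ))) := by linarith
      _ = 8 * (H.card:ℝ) * ((1:ℝ) / ((q:ℕ):ℝ)) := by ring
  obtain ⟨κ, hκ⟩ := hasProd_one_add u husum
  have hfun : (fun q : P => 1 + u q) = fun q : P => 1 - 2 * η q := by
    funext q
    rw [hu]
    ring
  rw [hfun] at hκ
  refine ⟨κ, hκ, ?_⟩
  apply tendsto_of_approx
  intro ε hε
  set d : ℝ := (H.card : ℝ) with hd
  have hd0 : (0:ℝ) ≤ d := Nat.cast_nonneg _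
  set ε' : ℝ := ε / (4 * d + 4) with hε'def
  have hε'0 : 0 < ε' := by rw [hε'def]; positivity
  -- choose s₀ from HasProd, s₁ from vanishing
  obtain ⟨s₀, hs₀⟩ := Metric.tendsto_atTop.mp hκ ε hε
  obtain ⟨s₁, hs₁⟩ := hsmall.vanishing (Metric.ball_mem_nhds 0 hε'0)
  set y := (s₀ ∪ s₁).sup (fun q => (q : ℕ)) with hy
  set SF : Finset ℕ := (Finset.Iic y).filter (· ∈ P) with hSF
  have hSF_mem : ∀ p, p ∈ SF ↔ p ≤ y ∧ p ∈ P := by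
    intro p
    rw [hSF, Finset.mem_filter, Finset.mem_Iic]
  have hSF_prime : ∀ p ∈ SF, Nat.Prime p := fun p hp => hP p ((hSF_mem p).mp hp).2
  have hSF_eta : ∀ p ∈ SF, HasDensity (NPH {p} H) (η p) :=
    fun p hp => hη p ((hSF_mem p).mp hp).2
  have hb := finite_case H SF hSF_prime η hSF_eta
  refine ⟨cesaroAvg ↑SF H, ∏ p ∈ SF, (1 - 2 * η p), hb, ?_, ?_⟩
  · -- eventual closeness via tail of P
    have hSFsub : (↑SF : Set ℕ) ⊆ P := by
      intro p hp
      rw [Finset.mem_coe] at hp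
      exact ((hSF_mem p).mp hp).2
    set S' : ℕ → Finset ℕ := fun x => (Finset.Ioc y (x + hmax)).filter (· ∈ P) with hS'
    have hS'mem : ∀ x p, p ∈ S' x ↔ (y < p ∧ p ≤ x + hmax) ∧ p ∈ P := by
      intro x p
      rw [hS', Finset.mem_filter, Finset.mem_Ioc]
    have hdv : ∀ x, ∀ p ∈ S' x, 0 < p :=
      fun x p hp => (hP p ((hS'mem x p).mp hp).2).pos
    have hc : ∀ x, ∑ p ∈ S' x, (1:ℝ)/(p:ℝ) ≤ ε' := by
      intro x
      set t : Finset P := (S' x).subtype (· ∈ P) with ht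
      have htsum : ∑ q ∈ t, (1:ℝ)/((q:ℕ):ℝ) = ∑ p ∈ S' x, (1:ℝ)/(p:ℝ) := by
        have h := Finset.sum_subtype_eq_sum_filter (fun n : ℕ => (1:ℝ)/(n:ℝ))
          (s := S' x) (p := (· ∈ P))
        rw [ht, h, Finset.filter_true_of_mem (fun p hp => ((hS'mem x p).mp hp).2)]
      have hdisj : Disjoint t s₁ := by
        rw [Finset.disjoint_left]
        intro q hq hq1
        have h1 : (q:ℕ) ≤ y := Finset.le_sup (Finset.mem_union_right s₀ hq1)
        have h2 : y < (q:ℕ) := by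
          rw [ht, Finset.mem_subtype] at hq
          exact ((hS'mem x q).mp hq).1.1
        omega
      have := hs₁ t hdisj
      rw [Metric.mem_ball, Real.dist_eq, sub_zero] at this
      rw [← htsum]
      exact le_of_lt ((le_abs_self _).trans_lt this)
    have heq : ∀ x, ∀ n ∈ Finset.Icc 1 x, (∀ p ∈ S' x, ∀ h ∈ H, ¬ p ∣ n + h) →
        LambdaPH P H n = LambdaPH ↑SF H n := by
      intro x n hn hcond
      rw [Finset.mem_Icc] at hn
      apply LambdaPH_congr P ↑SF H hSFsub n
      intro p hpP hpSF h hh hdvd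
      have hpy : y < p := by
        by_contra hcon
        exact hpSF (by rw [Finset.mem_coe, hSF_mem]; exact ⟨le_of_not_gt hcon, hpP⟩)
      have hple : p ≤ x + hmax := by
        have h1 : p ∣ n + h := hdvd
        have h2 : 0 < n + h := by omega
        have h3 : p ≤ n + h := Nat.le_of_dvd h2 h1
        have h4 : h ≤ hmax := hHm h hh
        omega
      have hpS' : p ∈ S' x := (hS'mem x p).mpr ⟨⟨hpy, hple⟩, hpP⟩
      exact hcond p hpS' h hh hdvd
    have hev := cesaro_diff_eventually H (LambdaPH P H) (LambdaPH ↑SF H)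
      (LambdaPH_abs_le P H) (LambdaPH_abs_le ↑SF H) S' id hdv ε' hc hmax hHm heq
    filter_upwards [hev] with x hx
    calc |cesaroAvg P H x - cesaroAvg ↑SF H x|
        = |(∑ n ∈ Finset.Icc 1 x, LambdaPH P H n)/x
            - (∑ n ∈ Finset.Icc 1 x, LambdaPH ↑SF H n)/x| := rfl
      _ ≤ 4 * H.card * ε' := hx
      _ ≤ ε := by
          rw [hε'def, hd]
          rw [div_eq_mul_inv]
          have h44 : (0:ℝ) < 4 * (H.card:ℝ) + 4 := by positivity
          have : 4 * (H.card:ℝ) * (ε * (4 * (H.card:ℝ) + 4)⁻¹) ≤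
              (4 * (H.card:ℝ) + 4) * (ε * (4 * (H.card:ℝ) + 4)⁻¹) := by
            apply mul_le_mul_of_nonneg_right (by linarith) (by positivity)
          calc 4 * (H.card:ℝ) * (ε * (4 * (H.card:ℝ) + 4)⁻¹)
              ≤ (4 * (H.card:ℝ) + 4) * (ε * (4 * (H.card:ℝ) + 4)⁻¹) := this
            _ = ε := by field_simp
  · -- closeness of partial product to κ
    set s₂ : Finset P := SF.subtype (· ∈ P) with hs₂def
    have hsub02 : s₀ ≤ s₂ := by
      intro q hq
      rw [hs₂def, Finset.mem_subtype, hSF_mem]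
      exact ⟨Finset.le_sup (Finset.mem_union_left s₁ hq), q.prop⟩
    have hprod : ∏ q ∈ s₂, (1 - 2 * η (q:ℕ)) = ∏ p ∈ SF, (1 - 2 * η p) := by
      have h := Finset.prod_subtype_eq_prod_filter (fun n : ℕ => 1 - 2 * η n)
        (s := SF) (p := (· ∈ P))
      rw [hs₂def, h, Finset.filter_true_of_mem (fun p hp => ((hSF_mem p).mp hp).2)]
    have := hs₀ s₂ hsub02
    rw [Real.dist_eq] at this
    rw [← hprod]
    exact le_of_lt this
end

section
/- Let P be a set of primes and let H = {h₁,…,h_d} be a non-empty finite set of non-negative integers. If the limit κ_P^H := lim_{x→∞} (1/x) Σ_{n≤x} λ_P(n+h₁)⋯λ_P(n+h_d) exists and |κ_P^H| = 1, then P is the empty set. -/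
open Filter Topology
open scoped symmDiff Classical

section StmtThreeAux

open Polynomial Finset


private lemma zmod2_cases (a : ZMod 2) : a = 0 ∨ a = 1 := by revert a; decide

private lemma zmod2_ne (a : ZMod 2) (h : a ≠ 0) : a = 1 := by revert a; decide

/-- Multiplicative evaluation of a polynomial over `ZMod 2` against a ±1-valued function. -/
noncomputable def PhiEv (f : ℕ → ℝ) (r : Polynomial (ZMod 2)) : ℝ :=
  r.toFinsupp.coeff.prod fun k a => if a = 1 then f k else 1

private lemma PhiEv_monomial (f : ℕ → ℝ) (k : ℕ) :
    PhiEv f (Polynomial.monomial k 1) = f k := by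
  rw [PhiEv, Polynomial.toFinsupp_monomial, AddMonoidAlgebra.coeff_single, Finsupp.prod_single_index] <;> simp

private lemma PhiEv_add (f : ℕ → ℝ) (hf : ∀ k, f k * f k = 1) (r r' : Polynomial (ZMod 2)) :
    PhiEv f (r + r') = PhiEv f r * PhiEv f r' := by
  rw [PhiEv, PhiEv, PhiEv, Polynomial.toFinsupp_add, AddMonoidAlgebra.coeff_add]
  apply Finsupp.prod_add_index
  · intro a _; simp
  · intro a _ b₁ b₂
    have h11 : (1 : ZMod 2) + 1 = 0 := by decide
    rcases zmod2_cases b₁ with h1 | h1 <;> rcases zmod2_cases b₂ with h2 | h2 <;>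
      subst h1 <;> subst h2 <;> simp [h11, hf]

private lemma PhiEv_sum (f : ℕ → ℝ) (hf : ∀ k, f k * f k = 1) {ι : Type*} (T : Finset ι)
    (p : ι → Polynomial (ZMod 2)) :
    PhiEv f (∑ i ∈ T, p i) = ∏ i ∈ T, PhiEv f (p i) := by
  induction T using Finset.cons_induction with
  | empty => simp [PhiEv]
  | cons a T ha ih => rw [Finset.sum_cons, Finset.prod_cons, PhiEv_add f hf, ih]

private lemma exists_pair (H : Finset ℕ) (hH : H.Nonempty) :
    ∃ (S : Finset ℕ) (v m : ℕ), 1 ≤ m ∧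
      ∀ f : ℕ → ℝ, (∀ k, f k * f k = 1) →
        (∏ s ∈ S, ∏ h ∈ H, f (s + h)) = f v * f (v + m) := by
  classical
  set p : Polynomial (ZMod 2) := ∑ h ∈ H, Polynomial.monomial h 1 with hp
  have hcoeff : ∀ k, p.coeff k = if k ∈ H then 1 else 0 := by
    intro k
    rw [hp, Polynomial.finset_sum_coeff]
    simp only [Polynomial.coeff_monomial]
    exact Finset.sum_ite_eq' H k (fun _ => (1 : ZMod 2))
  have hp0 : p ≠ 0 := by
    obtain ⟨h₀, hh₀⟩ := hH
    intro h0
    have := hcoeff h₀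
    rw [h0] at this
    simp [hh₀] at this
  have hmonic : p.Monic := by
    have h1 : p.leadingCoeff ≠ 0 := Polynomial.leadingCoeff_ne_zero.mpr hp0
    exact zmod2_ne _ h1
  set d := p.natDegree with hd
  obtain ⟨i, j, hlt, heq⟩ : ∃ i j : ℕ, i < j ∧
      (X : (ZMod 2)[X]) ^ i %ₘ p = X ^ j %ₘ p := by
    obtain ⟨i, j, hij, hF⟩ := Finite.exists_ne_map_eq_of_infinite
      (fun i : ℕ => fun k : Fin d => ((X : (ZMod 2)[X]) ^ i %ₘ p).coeff k)
    have hrem : (X : (ZMod 2)[X]) ^ i %ₘ p = X ^ j %ₘ p := by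
      ext k
      by_cases hk : k < d
      · exact congrFun hF ⟨k, hk⟩
      · push_neg at hk
        have hdd : ∀ r : Polynomial (ZMod 2), r.degree < p.degree → r.coeff k = 0 := by
          intro r hr
          apply Polynomial.coeff_eq_zero_of_degree_lt
          refine lt_of_lt_of_le hr ?_
          rw [Polynomial.degree_eq_natDegree hp0]
          exact_mod_cast hk
        rw [hdd _ (Polynomial.degree_modByMonic_lt _ hmonic),
          hdd _ (Polynomial.degree_modByMonic_lt _ hmonic)]
    rcases lt_or_gt_of_ne hij with h | h
    · exact ⟨i, j, h, hrem⟩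
    · exact ⟨j, i, h, hrem.symm⟩
  have e1 := Polynomial.modByMonic_add_div ((X : (ZMod 2)[X]) ^ i) p
  have e2 := Polynomial.modByMonic_add_div ((X : (ZMod 2)[X]) ^ j) p
  set q : Polynomial (ZMod 2) := (X ^ j /ₘ p) - (X ^ i /ₘ p) with hqdef
  have hsub : (X : (ZMod 2)[X]) ^ j - X ^ i = X ^ i + X ^ j := by
    have h2 : ∀ a b : ZMod 2, a - b = a + b := by decide
    ext k
    simp only [Polynomial.coeff_sub, Polynomial.coeff_add, h2]
    ring
  have hpq : p * q = X ^ i + X ^ j := by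
    rw [← hsub, hqdef]
    linear_combination e2 - e1 + heq
  have hqsum : q = ∑ s ∈ q.support, Polynomial.monomial s 1 := by
    conv_lhs => rw [Polynomial.as_sum_support q]
    refine Finset.sum_congr rfl fun s hs => ?_
    congr 1
    exact zmod2_ne _ (Polynomial.mem_support_iff.mp hs)
  have hps : p * q = ∑ s ∈ q.support, ∑ h ∈ H, Polynomial.monomial (s + h) 1 := by
    conv_lhs => rw [hqsum, hp]
    rw [Finset.sum_mul_sum, Finset.sum_comm]
    refine Finset.sum_congr rfl fun s _ => Finset.sum_congr rfl fun h _ => ?_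
    rw [Polynomial.monomial_mul_monomial, one_mul, add_comm]
  refine ⟨q.support, i, j - i, by omega, ?_⟩
  intro f hf
  have hL : PhiEv f (p * q) = ∏ s ∈ q.support, ∏ h ∈ H, f (s + h) := by
    rw [hps, PhiEv_sum f hf]
    refine Finset.prod_congr rfl fun s _ => ?_
    rw [PhiEv_sum f hf]
    exact Finset.prod_congr rfl fun h _ => PhiEv_monomial f _
  have hR : PhiEv f ((X : (ZMod 2)[X]) ^ i + X ^ j) = f i * f j := by
    rw [Polynomial.X_pow_eq_monomial, Polynomial.X_pow_eq_monomial,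
      PhiEv_add f hf, PhiEv_monomial, PhiEv_monomial]
  have := congrArg (PhiEv f) hpq
  rw [hL, hR] at this
  rw [this, Nat.add_sub_cancel' hlt.le]

end StmtThreeAux

section StmtThreeAna

open Filter Topology Finset

private lemma div_le_div_nat (a b : ℝ) (x : ℕ) (h : a ≤ b) : a / (x : ℝ) ≤ b / x := by
  rw [div_eq_mul_inv, div_eq_mul_inv]
  exact mul_le_mul_of_nonneg_right h (inv_nonneg.mpr (Nat.cast_nonneg x))

private lemma sum_shift_eq (u : ℕ → ℝ) (s x : ℕ) :
    ∑ n ∈ Finset.Icc 1 x, u (n + s) = ∑ n ∈ Finset.Icc (1 + s) (x + s), u n := by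
  rw [← Finset.map_add_right_Icc, Finset.sum_map]
  rfl

private lemma avg_diff_tendsto (u : ℕ → ℝ) (C : ℝ) (hC : ∀ n, |u n| ≤ C) (s : ℕ) :
    Filter.Tendsto (fun x : ℕ =>
      ((∑ n ∈ Finset.Icc 1 x, u n) - ∑ n ∈ Finset.Icc 1 x, u (n + s)) / x)
      Filter.atTop (nhds 0) := by
  rcases Nat.eq_zero_or_pos s with hs | hs
  · subst hs
    simp only [add_zero, sub_self, zero_div]
    exact tendsto_const_nhds
  apply squeeze_zero_norm' (a := fun x : ℕ => (2 * C * s) / x)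
  · filter_upwards [eventually_ge_atTop s] with x hx
    have key : |(∑ n ∈ Finset.Icc 1 x, u n) - ∑ n ∈ Finset.Icc 1 x, u (n + s)| ≤ 2 * C * s := by
      rw [sum_shift_eq]
      have h1 : Finset.Icc 1 x = Finset.Icc 1 s ∪ Finset.Ioc s x := by
        ext n
        simp only [Finset.mem_union, Finset.mem_Icc, Finset.mem_Ioc]
        omega
      have h2 : Finset.Icc (1 + s) (x + s) = Finset.Ioc s x ∪ Finset.Ioc x (x + s) := by
        ext n
        simp only [Finset.mem_union, Finset.mem_Icc, Finset.mem_Ioc]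
        omega
      have hd1 : Disjoint (Finset.Icc 1 s) (Finset.Ioc s x) := by
        rw [Finset.disjoint_left]
        intro n hn hn'
        simp only [Finset.mem_Icc, Finset.mem_Ioc] at hn hn'
        omega
      have hd2 : Disjoint (Finset.Ioc s x) (Finset.Ioc x (x + s)) := by
        rw [Finset.disjoint_left]
        intro n hn hn'
        simp only [Finset.mem_Ioc] at hn hn'
        omega
      rw [h1, h2, Finset.sum_union hd1, Finset.sum_union hd2]
      have habs : ∀ T : Finset ℕ, |∑ n ∈ T, u n| ≤ (T.card : ℝ) * C := by
        intro T
        refine le_trans (Finset.abs_sum_le_sum_abs _ _) ?_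
        calc ∑ n ∈ T, |u n| ≤ ∑ _n ∈ T, C := Finset.sum_le_sum fun n _ => hC n
        _ = (T.card : ℝ) * C := by rw [Finset.sum_const, nsmul_eq_mul]
      have k1 := habs (Finset.Icc 1 s)
      have k2 := habs (Finset.Ioc x (x + s))
      rw [Nat.card_Icc] at k1
      rw [Nat.card_Ioc] at k2
      have e1 : (s + 1 - 1 : ℕ) = s := by omega
      have e2 : (x + s - x : ℕ) = s := by omega
      rw [e1] at k1
      rw [e2] at k2
      calc |(∑ n ∈ Finset.Icc 1 s, u n) + (∑ n ∈ Finset.Ioc s x, u n) -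
            ((∑ n ∈ Finset.Ioc s x, u n) + ∑ n ∈ Finset.Ioc x (x + s), u n)|
          = |(∑ n ∈ Finset.Icc 1 s, u n) - ∑ n ∈ Finset.Ioc x (x + s), u n| := by ring_nf
        _ ≤ |∑ n ∈ Finset.Icc 1 s, u n| + |∑ n ∈ Finset.Ioc x (x + s), u n| := abs_sub _ _
        _ ≤ (s : ℝ) * C + (s : ℝ) * C := add_le_add k1 k2
        _ = 2 * C * s := by ring
    rw [Real.norm_eq_abs, abs_div, Nat.abs_cast]
    exact div_le_div_nat _ _ _ key
  · exact tendsto_const_div_atTop_nhds_zero_nat _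

private lemma avg_shift_of_avg (u : ℕ → ℝ) (C : ℝ) (hC : ∀ n, |u n| ≤ C) (s : ℕ) (L : ℝ)
    (h : Filter.Tendsto (fun x : ℕ => (∑ n ∈ Finset.Icc 1 x, u n) / x)
      Filter.atTop (nhds L)) :
    Filter.Tendsto (fun x : ℕ => (∑ n ∈ Finset.Icc 1 x, u (n + s)) / x)
      Filter.atTop (nhds L) := by
  have h2 := h.sub (avg_diff_tendsto u C hC s)
  rw [sub_zero] at h2
  refine Filter.Tendsto.congr (fun x => ?_) h2
  rw [div_sub_div_same, sub_sub_cancel]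

private lemma avg_of_avg_shift (u : ℕ → ℝ) (C : ℝ) (hC : ∀ n, |u n| ≤ C) (s : ℕ) (L : ℝ)
    (h : Filter.Tendsto (fun x : ℕ => (∑ n ∈ Finset.Icc 1 x, u (n + s)) / x)
      Filter.atTop (nhds L)) :
    Filter.Tendsto (fun x : ℕ => (∑ n ∈ Finset.Icc 1 x, u n) / x)
      Filter.atTop (nhds L) := by
  have h2 := h.add (avg_diff_tendsto u C hC s)
  rw [add_zero] at h2
  refine Filter.Tendsto.congr (fun x => ?_) h2
  rw [← add_div, add_sub_cancel]

private lemma avg_tendsto_of_dom (w G : ℕ → ℝ) (c : ℝ) (hdom : ∀ n, |w n - c| ≤ G n)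
    (hG : Filter.Tendsto (fun x : ℕ => (∑ n ∈ Finset.Icc 1 x, G n) / x)
      Filter.atTop (nhds 0)) :
    Filter.Tendsto (fun x : ℕ => (∑ n ∈ Finset.Icc 1 x, w n) / x)
      Filter.atTop (nhds c) := by
  have hD : Filter.Tendsto (fun x : ℕ => (∑ n ∈ Finset.Icc 1 x, (w n - c)) / x)
      Filter.atTop (nhds 0) := by
    apply squeeze_zero_norm (a := fun x : ℕ => (∑ n ∈ Finset.Icc 1 x, G n) / x) ?_ hG
    intro x
    rw [Real.norm_eq_abs, abs_div, Nat.abs_cast]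
    refine div_le_div_nat _ _ _ ?_
    refine le_trans (Finset.abs_sum_le_sum_abs _ _) (Finset.sum_le_sum fun n _ => hdom n)
  have hEv : ∀ᶠ x : ℕ in Filter.atTop,
      (∑ n ∈ Finset.Icc 1 x, (w n - c)) / x + c = (∑ n ∈ Finset.Icc 1 x, w n) / x := by
    filter_upwards [eventually_ge_atTop 1] with x hx
    have hx0 : (x : ℝ) ≠ 0 := Nat.cast_ne_zero.mpr (by omega)
    rw [Finset.sum_sub_distrib, Finset.sum_const, Nat.card_Icc]
    have : (x + 1 - 1 : ℕ) = x := by omega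
    rw [this, nsmul_eq_mul]
    field_simp
    ring
  have := (hD.add (tendsto_const_nhds (x := c))).congr' hEv
  rwa [zero_add] at this

private lemma lambdaP_sq (P : Set ℕ) (n : ℕ) : lambdaP P n * lambdaP P n = 1 := by
  rw [lambdaP, ← pow_add, ← two_mul, pow_mul]
  norm_num

private lemma abs_lambdaP (P : Set ℕ) (n : ℕ) : |lambdaP P n| = 1 := by
  rw [lambdaP, abs_pow, abs_neg, abs_one, one_pow]

private lemma abs_LambdaPH (P : Set ℕ) (H : Finset ℕ) (n : ℕ) : |LambdaPH P H n| = 1 := by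
  rw [LambdaPH, Finset.abs_prod]
  simp [abs_lambdaP]

private lemma pm_of_abs {a : ℝ} (h : |a| = 1) : a = 1 ∨ a = -1 :=
  (abs_eq (by norm_num)).mp h

end StmtThreeAna

/-- Assuming the Matomäki–Radziwiłł two-point bound, if `κ_P^H` exists
and `|κ_P^H| = 1` for some non-empty `H`, then `P = ∅`. -/
theorem stmt_3
    (hMR : ∀ Q : Set ℕ, (∀ q ∈ Q, Nat.Prime q) → Q.Nonempty → ∀ h : ℕ, 1 ≤ h →
      Filter.limsup (fun x : ℕ =>
        |(∑ n ∈ Finset.Icc 1 x, lambdaP Q n * lambdaP Q (n + h)) / (x : ℝ)|)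
        Filter.atTop < 1)
    (P : Set ℕ) (hP : ∀ q ∈ P, Nat.Prime q)
    (H : Finset ℕ) (hH : H.Nonempty) (κ : ℝ)
    (hκ : Filter.Tendsto (cesaroAvg P H) Filter.atTop (nhds κ))
    (habs : |κ| = 1) :
    P = ∅ := by
  classical
  by_contra hne
  have hPne : P.Nonempty := Set.nonempty_iff_ne_empty.mpr hne
  -- the two-point correlation driver
  have final : ∀ h' : ℕ, 1 ≤ h' →
      Filter.Tendsto (fun x : ℕ =>
        (∑ n ∈ Finset.Icc 1 x, lambdaP P n * lambdaP P (n + h')) / x)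
        Filter.atTop (nhds 1) → False := by
    intro h' hh' hcorr'
    have hbound := hMR P hP hPne h' hh'
    rw [hcorr'.abs.limsup_eq, abs_one] at hbound
    exact lt_irrefl 1 hbound
  have driver : ∀ h : ℕ, 1 ≤ h → ∀ c : ℝ, |c| = 1 →
      Filter.Tendsto (fun x : ℕ =>
        (∑ n ∈ Finset.Icc 1 x, lambdaP P n * lambdaP P (n + h)) / x)
        Filter.atTop (nhds c) → False := by
    intro h hh c hc hcorr
    rcases pm_of_abs hc with h1 | h1
    · exact final h hh (h1 ▸ hcorr)
    · subst h1
      set w : ℕ → ℝ := fun n => lambdaP P n * lambdaP P (n + h) with hw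
      have hwabs : ∀ n, |w n| = 1 := fun n => by
        rw [hw]; simp [abs_mul, abs_lambdaP]
      have hwpm : ∀ n, w n = 1 ∨ w n = -1 := fun n => pm_of_abs (hwabs n)
      set g2 : ℕ → ℝ := fun n => 1 + w n with hg2
      have hg2nn : ∀ n, 0 ≤ g2 n := fun n => by
        rcases hwpm n with h' | h' <;> simp [hg2, h']
      have hg2abs : ∀ n, |g2 n| ≤ 2 := fun n => by
        rcases hwpm n with h' | h' <;> simp [hg2, h'] <;> norm_num
      have hg2avg : Filter.Tendsto (fun x : ℕ => (∑ n ∈ Finset.Icc 1 x, g2 n) / x)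
          Filter.atTop (nhds 0) := by
        have hEq : ∀ᶠ x : ℕ in Filter.atTop,
            (∑ n ∈ Finset.Icc 1 x, w n) / x + 1 = (∑ n ∈ Finset.Icc 1 x, g2 n) / x := by
          filter_upwards [Filter.eventually_ge_atTop 1] with x hx
          have hx0 : (x : ℝ) ≠ 0 := Nat.cast_ne_zero.mpr (by omega)
          have : ∑ n ∈ Finset.Icc 1 x, g2 n = (x : ℝ) + ∑ n ∈ Finset.Icc 1 x, w n := by
            simp only [hg2]
            rw [Finset.sum_add_distrib, Finset.sum_const, Nat.card_Icc]
            have hxx : (x + 1 - 1 : ℕ) = x := by omega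
            rw [hxx, nsmul_eq_mul, mul_one]
          rw [this]
          field_simp
          ring
        have := (hcorr.add (tendsto_const_nhds (x := (1 : ℝ)))).congr' hEq
        rwa [neg_add_cancel] at this
      have hg2shift := avg_shift_of_avg g2 2 hg2abs h 0 hg2avg
      have hdom : ∀ n, |lambdaP P n * lambdaP P (n + 2 * h) - 1| ≤ g2 n + g2 (n + h) := by
        intro n
        by_cases hz : g2 n = 0 ∧ g2 (n + h) = 0
        · obtain ⟨hz1, hz2⟩ := hz
          have hw1 : lambdaP P n * lambdaP P (n + h) = -1 := by
            have h0 : (1 : ℝ) + lambdaP P n * lambdaP P (n + h) = 0 := hz1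
            linarith
          have hw2 : lambdaP P (n + h) * lambdaP P (n + h + h) = -1 := by
            have h0 : (1 : ℝ) + lambdaP P (n + h) * lambdaP P (n + h + h) = 0 := hz2
            linarith
          have hkey : lambdaP P n * lambdaP P (n + 2 * h) = 1 := by
            have h2 : n + 2 * h = n + h + h := by ring
            rw [h2]
            have hsq := lambdaP_sq P (n + h)
            calc lambdaP P n * lambdaP P (n + h + h)
                = lambdaP P n * lambdaP P (n + h + h) *
                  (lambdaP P (n + h) * lambdaP P (n + h)) := by rw [hsq, mul_one]
              _ = (lambdaP P n * lambdaP P (n + h)) *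
                  (lambdaP P (n + h) * lambdaP P (n + h + h)) := by ring
              _ = 1 := by rw [hw1, hw2]; norm_num
          rw [hkey]
          simp only [sub_self, abs_zero]
          exact add_nonneg (hg2nn n) (hg2nn (n + h))
        · have hcase : ∀ k, g2 k = 0 ∨ g2 k = 2 := by
            intro k
            have hrfl : g2 k = 1 + w k := rfl
            rcases hwpm k with a | a
            · right; rw [hrfl, a]; norm_num
            · left; rw [hrfl, a]; norm_num
          have h2le : (2 : ℝ) ≤ g2 n + g2 (n + h) := by
            rcases hcase n with b1 | b1
            · rcases hcase (n + h) with b2 | b2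
              · exact absurd ⟨b1, b2⟩ hz
              · rw [b1, b2]; norm_num
            · rcases hcase (n + h) with b2 | b2 <;> rw [b1, b2] <;> norm_num
          refine le_trans ?_ h2le
          have habs2 : |lambdaP P n * lambdaP P (n + 2 * h)| = 1 := by
            simp [abs_mul, abs_lambdaP]
          calc |lambdaP P n * lambdaP P (n + 2 * h) - 1|
              ≤ |lambdaP P n * lambdaP P (n + 2 * h)| + |(1 : ℝ)| := abs_sub _ _
            _ = 2 := by rw [habs2, abs_one]; norm_num
      have hGavg : Filter.Tendsto
          (fun x : ℕ => (∑ n ∈ Finset.Icc 1 x, (g2 n + g2 (n + h))) / x)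
          Filter.atTop (nhds 0) := by
        have := hg2avg.add hg2shift
        rw [add_zero] at this
        refine this.congr fun x => ?_
        conv_rhs => rw [Finset.sum_add_distrib, add_div]
      have hfinal := avg_tendsto_of_dom
        (fun n => lambdaP P n * lambdaP P (n + 2 * h))
        (fun n => g2 n + g2 (n + h)) 1 hdom hGavg
      exact final (2 * h) (by omega) hfinal
  -- main argument
  have hκκ : κ * κ = 1 := by
    rcases pm_of_abs habs with h1 | h1 <;> rw [h1] <;> norm_num
  set g : ℕ → ℝ := fun n => 1 - κ * LambdaPH P H n with hg
  have hgabs : ∀ n, |g n| ≤ 2 := by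
    intro n
    rw [hg]
    have h1 : |κ * LambdaPH P H n| = 1 := by
      rw [abs_mul, habs, abs_LambdaPH, mul_one]
    calc |1 - κ * LambdaPH P H n| ≤ |(1 : ℝ)| + |κ * LambdaPH P H n| := abs_sub _ _
      _ = 2 := by rw [h1, abs_one]; norm_num
  have hgnn : ∀ n, 0 ≤ g n := by
    intro n
    rw [hg]
    have h1 : κ * LambdaPH P H n ≤ 1 := by
      have : |κ * LambdaPH P H n| = 1 := by rw [abs_mul, habs, abs_LambdaPH, mul_one]
      linarith [le_abs_self (κ * LambdaPH P H n), this.le]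
    simpa using h1
  have hgtwo : ∀ n, LambdaPH P H n ≠ κ → g n = 2 := by
    intro n hne'
    have hrfl : g n = 1 - κ * LambdaPH P H n := rfl
    rw [hrfl]
    rcases pm_of_abs habs with h1 | h1 <;> rcases pm_of_abs (abs_LambdaPH P H n) with h2 | h2 <;>
      rw [h1, h2] <;> first
        | exact absurd (h2.trans h1.symm) hne'
        | norm_num
  have hgzero : ∀ n, LambdaPH P H n = κ → g n = 0 := by
    intro n he
    have hrfl : g n = 1 - κ * LambdaPH P H n := rfl
    rw [hrfl, he, hκκ]; ring
  have T0 : Filter.Tendsto (fun x : ℕ => (∑ n ∈ Finset.Icc 1 x, g n) / x)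
      Filter.atTop (nhds 0) := by
    have hEq : ∀ᶠ x : ℕ in Filter.atTop,
        1 - κ * cesaroAvg P H x = (∑ n ∈ Finset.Icc 1 x, g n) / x := by
      filter_upwards [Filter.eventually_ge_atTop 1] with x hx
      have hx0 : (x : ℝ) ≠ 0 := Nat.cast_ne_zero.mpr (by omega)
      have hsum : ∑ n ∈ Finset.Icc 1 x, g n =
          (x : ℝ) - κ * ∑ n ∈ Finset.Icc 1 x, LambdaPH P H n := by
        simp only [hg]
        rw [Finset.sum_sub_distrib, Finset.sum_const, Nat.card_Icc, Finset.mul_sum]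
        have hxx : (x + 1 - 1 : ℕ) = x := by omega
        rw [hxx, nsmul_eq_mul, mul_one]
      rw [hsum, cesaroAvg]
      field_simp
    have hT := tendsto_const_nhds (x := (1 : ℝ)) (f := Filter.atTop (α := ℕ))
    have := (hT.sub (hκ.const_mul κ)).congr' hEq
    have hz : (1 : ℝ) - κ * κ = 0 := by rw [hκκ]; ring
    rwa [hz] at this
  obtain ⟨S, v, m, hm, hident⟩ := exists_pair H hH
  set c : ℝ := κ ^ S.card with hc
  have hcabs : |c| = 1 := by rw [hc, abs_pow, habs, one_pow]
  have hGavg : Filter.Tendsto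
      (fun x : ℕ => (∑ n ∈ Finset.Icc 1 x, ∑ s ∈ S, g (n + s)) / x)
      Filter.atTop (nhds 0) := by
    have heach : ∀ s ∈ S, Filter.Tendsto
        (fun x : ℕ => (∑ n ∈ Finset.Icc 1 x, g (n + s)) / x) Filter.atTop (nhds 0) :=
      fun s _ => avg_shift_of_avg g 2 hgabs s 0 T0
    have hsum := tendsto_finset_sum S heach
    rw [Finset.sum_const, smul_zero] at hsum
    refine hsum.congr fun x => ?_
    rw [← Finset.sum_div, Finset.sum_comm]
  have hdom : ∀ n, |lambdaP P (n + v) * lambdaP P (n + v + m) - c| ≤ ∑ s ∈ S, g (n + s) := by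
    intro n
    by_cases hall : ∀ s ∈ S, LambdaPH P H (n + s) = κ
    · have hid := hident (fun k => lambdaP P (n + k)) (fun k => lambdaP_sq P (n + k))
      have hconn : ∀ s, (∏ h ∈ H, lambdaP P (n + (s + h))) = LambdaPH P H (n + s) := by
        intro s
        rw [LambdaPH]
        exact Finset.prod_congr rfl fun h _ => by rw [add_assoc]
      have hprod : (∏ s ∈ S, ∏ h ∈ H, lambdaP P (n + (s + h))) = c := by
        rw [hc]
        calc (∏ s ∈ S, ∏ h ∈ H, lambdaP P (n + (s + h)))
            = ∏ s ∈ S, LambdaPH P H (n + s) := Finset.prod_congr rfl fun s _ => hconn s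
          _ = ∏ _s ∈ S, κ := Finset.prod_congr rfl hall
          _ = κ ^ S.card := Finset.prod_const κ
      rw [hid] at hprod
      have hva : n + v + m = n + (v + m) := by ring
      rw [hva, hprod]
      simp only [sub_self, abs_zero]
      exact Finset.sum_nonneg fun s _ => hgnn (n + s)
    · push_neg at hall
      obtain ⟨s₀, hs₀, hs₀ne⟩ := hall
      have h2le : (2 : ℝ) ≤ ∑ s ∈ S, g (n + s) := by
        have := Finset.single_le_sum (fun s _ => hgnn (n + s)) hs₀
        rw [hgtwo _ hs₀ne] at this
        exact this
      refine le_trans ?_ h2le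
      have habs2 : |lambdaP P (n + v) * lambdaP P (n + v + m)| = 1 := by
        simp [abs_mul, abs_lambdaP]
      calc |lambdaP P (n + v) * lambdaP P (n + v + m) - c|
          ≤ |lambdaP P (n + v) * lambdaP P (n + v + m)| + |c| := abs_sub _ _
        _ = 2 := by rw [habs2, hcabs]; norm_num
  have hcorr0 := avg_tendsto_of_dom
    (fun n => lambdaP P (n + v) * lambdaP P (n + v + m))
    (fun n => ∑ s ∈ S, g (n + s)) c hdom hGavg
  have hcorr1 : Filter.Tendsto (fun x : ℕ =>
      (∑ n ∈ Finset.Icc 1 x, lambdaP P n * lambdaP P (n + m)) / x)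
      Filter.atTop (nhds c) := by
    refine avg_of_avg_shift (fun n => lambdaP P n * lambdaP P (n + m)) 1
      (fun n => by rw [abs_mul, abs_lambdaP, abs_lambdaP, mul_one]) v c ?_
    exact hcorr0
  exact driver m hm c hcabs hcorr1
end

section
/- Suppose P₁ and P₂ are non-empty, mutually disjoint subsets of the primes. Then for any A ∈ 𝒜_{P₁} and B ∈ 𝒜_{P₂}, the natural densities of A, B, and A ∩ B exist and δ(A ∩ B) = δ(A) · δ(B). -/
open Filter Topology
open scoped symmDiff Classical

lemma mem_add_mul_period {A : Set ℕ} {M : ℕ} (h : ∀ n, n ∈ A ↔ n + M ∈ A)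
    (n k : ℕ) : n + k * M ∈ A ↔ n ∈ A := by
  induction k with
  | zero => simp
  | succ k ih =>
      have e : n + (k + 1) * M = (n + k * M) + M := by ring
      rw [e, ← h (n + k * M), ih]

lemma period_of_dvd {A : Set ℕ} {M K : ℕ} (h : ∀ n, n ∈ A ↔ n + M ∈ A)
    (hd : M ∣ K) : ∀ n, n ∈ A ↔ n + K ∈ A := by
  intro n
  obtain ⟨k, rfl⟩ := hd
  rw [mul_comm]
  exact (mem_add_mul_period h n k).symm

lemma mem_mod_period {A : Set ℕ} {M : ℕ} (h : ∀ n, n ∈ A ↔ n + M ∈ A) (n : ℕ) :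
    n ∈ A ↔ n % M ∈ A := by
  conv_lhs => rw [← Nat.mod_add_div' n M]
  exact mem_add_mul_period h (n % M) (n / M)

lemma shift_mod {M : ℕ} (hM : 0 < M) (a r : ℕ) (hr : r < M) :
    (a + (r + M - a % M) % M) % M = r := by
  have h1 : a % M < M := Nat.mod_lt _ hM
  have e1 : a % M + (r + M - a % M) = r + M := by omega
  have hcong : (a + (r + M - a % M) % M) ≡ a % M + (r + M - a % M) [MOD M] :=
    Nat.ModEq.add (Nat.mod_modEq a M).symm (Nat.mod_modEq _ M)
  calc (a + (r + M - a % M) % M) % M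
      = (a % M + (r + M - a % M)) % M := hcong
    _ = (r + M) % M := by rw [e1]
    _ = r := by rw [Nat.add_mod_right, Nat.mod_eq_of_lt hr]

lemma block_count {A : Set ℕ} {M : ℕ} (hM : 0 < M) (h : ∀ n, n ∈ A ↔ n + M ∈ A)
    (a : ℕ) :
    ((Finset.Ico a (a + M)).filter (fun n => n ∈ A)).card
      = ((Finset.range M).filter (fun n => n ∈ A)).card := by
  apply Finset.card_bij (fun n _ => n % M)
  · intro n hn
    simp only [Finset.mem_filter, Finset.mem_Ico] at hn
    simp only [Finset.mem_filter, Finset.mem_range]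
    exact ⟨Nat.mod_lt _ hM, (mem_mod_period h n).mp hn.2⟩
  · intro n₁ hn₁ n₂ hn₂ he
    simp only [Finset.mem_filter, Finset.mem_Ico] at hn₁ hn₂
    rcases le_total n₁ n₂ with hle | hle
    · have hd : M ∣ n₂ - n₁ := (Nat.modEq_iff_dvd' hle).mp he
      have h0 : n₂ - n₁ = 0 := by
        rcases Nat.eq_zero_or_pos (n₂ - n₁) with h0 | h0
        · exact h0
        · exact absurd (Nat.le_of_dvd h0 hd) (by omega)
      omega
    · have hd : M ∣ n₁ - n₂ := (Nat.modEq_iff_dvd' hle).mp he.symm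
      have : n₁ - n₂ = 0 := by
        rcases Nat.eq_zero_or_pos (n₁ - n₂) with h0 | h0
        · exact h0
        · exact absurd (Nat.le_of_dvd h0 hd) (by omega)
      omega
  · intro r hr
    simp only [Finset.mem_filter, Finset.mem_range] at hr
    refine ⟨a + (r + M - a % M) % M, ?_, shift_mod hM a r hr.1⟩
    have hlt : (r + M - a % M) % M < M := Nat.mod_lt _ hM
    simp only [Finset.mem_filter, Finset.mem_Ico]
    refine ⟨⟨by omega, by omega⟩, ?_⟩
    rw [mem_mod_period h, shift_mod hM a r hr.1]
    exact hr.2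

lemma block_count_mul {A : Set ℕ} {M : ℕ} (hM : 0 < M) (h : ∀ n, n ∈ A ↔ n + M ∈ A)
    (a q : ℕ) :
    ((Finset.Ico a (a + q * M)).filter (fun n => n ∈ A)).card
      = q * ((Finset.range M).filter (fun n => n ∈ A)).card := by
  induction q with
  | zero => simp
  | succ q ih =>
      have hsplit : Finset.Ico a (a + (q + 1) * M)
          = Finset.Ico a (a + q * M) ∪ Finset.Ico (a + q * M) (a + q * M + M) := by
        rw [Finset.Ico_union_Ico_eq_Ico (by omega) (by ring_nf; omega)]
        congr 1
        ring
      rw [hsplit, Finset.filter_union, Finset.card_union_of_disjoint]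
      · rw [ih, block_count hM h]
        ring
      · exact Finset.disjoint_filter_filter
          (Finset.Ico_disjoint_Ico_consecutive a (a + q * M) (a + q * M + M))

lemma density_periodic {A : Set ℕ} {M : ℕ} (hM : 0 < M) (h : ∀ n, n ∈ A ↔ n + M ∈ A) :
    HasDensity A ((((Finset.range M).filter (fun n => n ∈ A)).card : ℝ) / M) := by
  set c := ((Finset.range M).filter (fun n => n ∈ A)).card with hc
  have hcM : c ≤ M := le_trans (Finset.card_filter_le _ _) (by simp)
  have key : ∀ x : ℕ, 1 ≤ x → |(countIn A x : ℝ) / x - (c : ℝ) / M| ≤ (M : ℝ) / x := by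
    intro x hx
    set q := x / M with hq
    set r := x % M with hr
    have hxqr : q * M + r = x := by
      have := Nat.div_add_mod x M
      rw [mul_comm] at this
      exact this
    have hrM : r < M := Nat.mod_lt _ hM
    -- split the count
    have hsplit : countIn A x = q * c + ((Finset.Ico (1 + q * M) (x + 1)).filter
        (fun n => n ∈ A)).card := by
      have h1 : Finset.Icc 1 x = Finset.Ico 1 (x + 1) := by
        rw [Finset.Ico_add_one_right_eq_Icc]
      have h2 : Finset.Ico 1 (x + 1)
          = Finset.Ico 1 (1 + q * M) ∪ Finset.Ico (1 + q * M) (x + 1) := by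
        rw [Finset.Ico_union_Ico_eq_Ico (by omega) (by omega)]
      rw [countIn, h1, h2, Finset.filter_union, Finset.card_union_of_disjoint
        (Finset.disjoint_filter_filter (Finset.Ico_disjoint_Ico_consecutive _ _ _))]
      congr 1
      exact block_count_mul hM h 1 q
    set e := ((Finset.Ico (1 + q * M) (x + 1)).filter (fun n => n ∈ A)).card with he
    have heb : e ≤ r := by
      calc e ≤ (Finset.Ico (1 + q * M) (x + 1)).card := Finset.card_filter_le _ _
        _ = x + 1 - (1 + q * M) := Nat.card_Ico _ _
        _ = r := by omega
    have hxpos : (0 : ℝ) < x := by exact_mod_cast hx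
    have hMpos : (0 : ℝ) < M := by exact_mod_cast hM
    have h1 : (countIn A x : ℝ) = q * c + e := by exact_mod_cast hsplit
    have h2 : (x : ℝ) = q * M + r := by exact_mod_cast hxqr.symm
    have hnum : (countIn A x : ℝ) * M - x * c = e * M - c * r := by
      rw [h1, h2]; ring
    rw [div_sub_div _ _ (ne_of_gt hxpos) (ne_of_gt hMpos), abs_div,
      abs_of_pos (mul_pos hxpos hMpos), div_le_div_iff₀ (mul_pos hxpos hMpos) hxpos, hnum]
    have hcR : (c : ℝ) ≤ M := by exact_mod_cast hcM
    have heR : (e : ℝ) ≤ r := by exact_mod_cast heb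
    have hrR : (r : ℝ) ≤ M := by exact_mod_cast hrM.le
    have h0e : (0 : ℝ) ≤ e := Nat.cast_nonneg _
    have h0c : (0 : ℝ) ≤ c := Nat.cast_nonneg _
    have h0r : (0 : ℝ) ≤ r := by positivity
    have habs : |(e : ℝ) * M - c * r| ≤ M * M := by
      rw [abs_le]
      constructor <;> nlinarith
    nlinarith [abs_nonneg ((e : ℝ) * M - c * r)]
  rw [HasDensity, ← tendsto_sub_nhds_zero_iff]
  refine squeeze_zero_norm' ?_ (tendsto_const_div_atTop_nhds_zero_nat (M : ℝ))
  filter_upwards [eventually_ge_atTop 1] with x hx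
  simpa [Real.norm_eq_abs] using key x hx

lemma crt_count {A B : Set ℕ} {M N : ℕ} (hM : 0 < M) (hN : 0 < N)
    (hco : Nat.Coprime M N)
    (hA : ∀ n, n ∈ A ↔ n % M ∈ A) (hB : ∀ n, n ∈ B ↔ n % N ∈ B) :
    ((Finset.range (M * N)).filter (fun n => n ∈ A ∩ B)).card
      = ((Finset.range M).filter (fun n => n ∈ A)).card
        * ((Finset.range N).filter (fun n => n ∈ B)).card := by
  rw [← Finset.card_product, ← Finset.filter_product]
  apply Finset.card_bij (fun n _ => (n % M, n % N))
  · intro n hn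
    simp only [Finset.mem_filter, Finset.mem_range, Set.mem_inter_iff] at hn
    simp only [Finset.mem_filter, Finset.mem_product, Finset.mem_range]
    exact ⟨⟨Nat.mod_lt _ hM, Nat.mod_lt _ hN⟩, (hA n).mp hn.2.1, (hB n).mp hn.2.2⟩
  · intro n₁ hn₁ n₂ hn₂ he
    simp only [Finset.mem_filter, Finset.mem_range] at hn₁ hn₂
    have h1 : n₁ ≡ n₂ [MOD M] := by
      have := congrArg Prod.fst he; simpa [Nat.ModEq] using this
    have h2 : n₁ ≡ n₂ [MOD N] := by
      have := congrArg Prod.snd he; simpa [Nat.ModEq] using this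
    have h3 : n₁ ≡ n₂ [MOD M * N] :=
      (Nat.modEq_and_modEq_iff_modEq_mul hco).mp ⟨h1, h2⟩
    have := h3
    rw [Nat.ModEq, Nat.mod_eq_of_lt hn₁.1, Nat.mod_eq_of_lt hn₂.1] at this
    exact this
  · rintro ⟨u, v⟩ huv
    simp only [Finset.mem_filter, Finset.mem_product, Finset.mem_range] at huv
    obtain ⟨⟨hu, hv⟩, huA, hvB⟩ := huv
    obtain ⟨k, hk1, hk2⟩ := Nat.chineseRemainder hco u v
    refine ⟨k % (M * N), ?_, ?_⟩
    · have hk1' : k % (M * N) % M = u := by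
        rw [Nat.mod_mod_of_dvd _ ⟨N, rfl⟩]
        rw [Nat.ModEq] at hk1
        rw [hk1, Nat.mod_eq_of_lt hu]
      have hk2' : k % (M * N) % N = v := by
        rw [Nat.mod_mod_of_dvd _ ⟨M, mul_comm M N⟩]
        rw [Nat.ModEq] at hk2
        rw [hk2, Nat.mod_eq_of_lt hv]
      simp only [Finset.mem_filter, Finset.mem_range, Set.mem_inter_iff]
      refine ⟨Nat.mod_lt _ (by positivity), ?_, ?_⟩
      · rw [hA, hk1']; exact huA
      · rw [hB, hk2']; exact hvB
    · have hk1' : k % (M * N) % M = u := by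
        rw [Nat.mod_mod_of_dvd _ ⟨N, rfl⟩]
        rw [Nat.ModEq] at hk1
        rw [hk1, Nat.mod_eq_of_lt hu]
      have hk2' : k % (M * N) % N = v := by
        rw [Nat.mod_mod_of_dvd _ ⟨M, mul_comm M N⟩]
        rw [Nat.ModEq] at hk2
        rw [hk2, Nat.mod_eq_of_lt hv]
      exact Prod.ext hk1' hk2'

lemma cset_period {r s M : ℕ} (hdvd : s ∣ M) (n : ℕ) :
    n ∈ Cset r s ↔ n + M ∈ Cset r s := by
  have hmod : ((n : ℤ) + (M : ℤ)) ≡ (n : ℤ) [ZMOD (s : ℤ)] := by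
    rw [Int.modEq_iff_dvd]
    simpa using (Int.natCast_dvd_natCast.mpr hdvd).neg_right
  simp only [Cset, Set.mem_setOf_eq, Nat.cast_add]
  exact ⟨fun h => hmod.trans h, fun h => hmod.symm.trans h⟩

lemma calA_period {P : Set ℕ} {A : Set ℕ} (hA : A ∈ calA P) :
    ∃ M : ℕ, 0 < M ∧ (∀ p, p.Prime → p ∣ M → p ∈ P) ∧ ∀ n, n ∈ A ↔ n + M ∈ A := by
  obtain ⟨F, hF, rfl⟩ := hA
  refine ⟨∏ q ∈ F, q.2, Finset.prod_pos fun q hq => (hF q hq).1, ?_, ?_⟩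
  · intro p hp hdvd
    obtain ⟨q, hq, hdq⟩ := (hp.prime.dvd_finset_prod_iff _).mp hdvd
    exact (hF q hq).2 p hp hdq
  · intro n
    simp only [Set.mem_iUnion]
    constructor <;> rintro ⟨q, hq, hmem⟩ <;> refine ⟨q, hq, ?_⟩
    · exact (cset_period (Finset.dvd_prod_of_mem _ hq) n).mp hmem
    · exact (cset_period (Finset.dvd_prod_of_mem _ hq) n).mpr hmem


/-- For non-empty disjoint sets of primes `P₁, P₂`, any `A ∈ 𝒜_{P₁}`
and `B ∈ 𝒜_{P₂}` have natural densities, `A ∩ B` has one, and `δ(A ∩ B) = δ(A) δ(B)`. -/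
theorem stmt_11 (P₁ P₂ : Set ℕ) (hP₁ : ∀ q ∈ P₁, Nat.Prime q)
    (hP₂ : ∀ q ∈ P₂, Nat.Prime q) (hne₁ : P₁.Nonempty) (hne₂ : P₂.Nonempty)
    (hdisj : Disjoint P₁ P₂)
    (A B : Set ℕ) (hA : A ∈ calA P₁) (hB : B ∈ calA P₂) :
    ∃ a b : ℝ, HasDensity A a ∧ HasDensity B b ∧ HasDensity (A ∩ B) (a * b) := by
  obtain ⟨M, hM, hMsm, hAper⟩ := calA_period hA
  obtain ⟨N, hN, hNsm, hBper⟩ := calA_period hB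
  have hco : Nat.Coprime M N := by
    by_contra hc
    obtain ⟨p, hp, hpd⟩ := Nat.exists_prime_and_dvd hc
    have h1 : p ∈ P₁ := hMsm p hp (hpd.trans (Nat.gcd_dvd_left M N))
    have h2 : p ∈ P₂ := hNsm p hp (hpd.trans (Nat.gcd_dvd_right M N))
    exact Set.disjoint_left.mp hdisj h1 h2
  have hdA := density_periodic hM hAper
  have hdB := density_periodic hN hBper
  have hABper : ∀ n, n ∈ A ∩ B ↔ n + M * N ∈ A ∩ B := by
    intro n
    have h1 := period_of_dvd hAper ⟨N, rfl⟩ n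
    have h2 := period_of_dvd hBper ⟨M, mul_comm M N⟩ n
    simp only [Set.mem_inter_iff]
    rw [← h1, ← h2]
  have hMN : 0 < M * N := Nat.mul_pos hM hN
  have hdAB := density_periodic hMN hABper
  have hcount := crt_count hM hN hco (mem_mod_period hAper) (mem_mod_period hBper)
  refine ⟨_, _, hdA, hdB, ?_⟩
  have heq : ((((Finset.range M).filter (fun n => n ∈ A)).card : ℝ) / M)
      * ((((Finset.range N).filter (fun n => n ∈ B)).card : ℝ) / N)
      = ((((Finset.range (M * N)).filter (fun n => n ∈ A ∩ B)).card : ℝ) / (M * N)) := by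
    rw [hcount]
    have hMne : (M : ℝ) ≠ 0 := by positivity
    have hNne : (N : ℝ) ≠ 0 := by positivity
    push_cast
    rw [div_mul_div_comm]
  rw [heq, show ((M : ℝ) * (N : ℝ)) = ((M * N : ℕ) : ℝ) by push_cast; ring]
  convert hdAB using 5
end
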